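/- arXiv:1709.02919 — 10 statements merged into one kernel-verified Lean document; each statement's English description precedes it below -/
import Mathlib

section
/- There exist absolute constants c, C > 0 with the following property. Let ε ∈ (0, 1/4], let n and r be positive integers with n ≥ C·ε^{-2}, and let S be a real r × n matrix. Suppose there is a function f mapping ℝ^r to finite subsets of {1,…,n} such that for every nonzero vector x ∈ ℝ^n with all coordinates nonnegative, f(Sx) contains every index i with x_i ≥ ε·‖x‖₁ and contains no index i with x_i < (ε/2)·‖x‖₁. Then r ≥ c·ε^{-2}. -/
open Finset

open Module


lemma sum_pos_of_nonneg_ne_zero {n : ℕ} (w : Fin n → ℝ) (hnn : ∀ j, 0 ≤ w j)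
    (hw : w ≠ 0) : 0 < ∑ j, w j := by
  obtain ⟨j, hj⟩ := Function.ne_iff.mp hw
  have h1 : 0 < w j := lt_of_le_of_ne (hnn j) (Ne.symm (by simpa using hj))
  have h2 : w j ≤ ∑ i, w i := Finset.single_le_sum (fun i _ => hnn i) (mem_univ j)
  linarith

lemma no_nonneg_kernel {n r : ℕ} {ε : ℝ} (hε : 0 < ε) (hε4 : ε ≤ 1/4)
    {S : Matrix (Fin r) (Fin n) ℝ} {f : (Fin r → ℝ) → Finset (Fin n)}
    (hf : ∀ x : Fin n → ℝ, x ≠ 0 → (∀ i, 0 ≤ x i) →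
      (∀ i : Fin n, ε * (∑ j, |x j|) ≤ x i → i ∈ f (S.mulVec x)) ∧
      (∀ i : Fin n, x i < (ε / 2) * (∑ j, |x j|) → i ∉ f (S.mulVec x)))
    (z : Fin n → ℝ) (hker : S.mulVec z = 0) (hz : z ≠ 0) (hznn : ∀ j, 0 ≤ z j)
    (j0 : Fin n) (hj0 : z j0 = 0) : False := by
  set L : ℝ := ∑ j, z j with hL
  have hLpos : 0 < L := sum_pos_of_nonneg_ne_zero z hznn hz
  set x : Fin n → ℝ := fun j => if j = j0 then 1 else 0 with hxdef
  have hx0 : x ≠ 0 := by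
    intro h
    have := congrFun h j0
    simp [hxdef] at this
  have hxnn : ∀ j, 0 ≤ x j := by
    intro j; simp only [hxdef]; split <;> norm_num
  have hxsum : ∑ j, |x j| = 1 := by
    simp [hxdef, apply_ite abs]
  have hmem : j0 ∈ f (S.mulVec x) := by
    refine (hf x hx0 hxnn).1 j0 ?_
    rw [hxsum]
    simp [hxdef]
    linarith
  set lam : ℝ := 2 / (ε * L) with hlamdef
  have hlam : 0 < lam := by positivity
  set y : Fin n → ℝ := x + lam • z with hydef
  have hynn : ∀ j, 0 ≤ y j := by
    intro j
    have := hznn j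
    have := hxnn j
    simp only [hydef, Pi.add_apply, Pi.smul_apply, smul_eq_mul]
    nlinarith
  have hyj0 : y j0 = 1 := by
    simp [hydef, hxdef, hj0]
  have hy0 : y ≠ 0 := by
    intro h
    have := congrFun h j0
    rw [hyj0] at this
    simp at this
  have hysum : ∑ j, |y j| = 1 + lam * L := by
    have : ∀ j, |y j| = x j + lam * z j := by
      intro j
      rw [abs_of_nonneg (hynn j)]
      simp [hydef]
    rw [Finset.sum_congr rfl fun j _ => this j, Finset.sum_add_distrib, ← Finset.mul_sum]
    congr 1
    simp [hxdef]
  have hSy : S.mulVec y = S.mulVec x := by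
    rw [hydef, Matrix.mulVec_add, Matrix.mulVec_smul, hker]
    simp
  have hnot : j0 ∉ f (S.mulVec y) := by
    refine (hf y hy0 hynn).2 j0 ?_
    rw [hysum, hyj0]
    have hlamL : lam * L = 2 / ε := by
      rw [hlamdef, div_mul_eq_mul_div, div_eq_div_iff (by positivity) (by positivity)]
      ring
    rw [hlamL]
    have : ε / 2 * (1 + 2 / ε) = ε / 2 + 1 := by
      field_simp
    rw [this]
    linarith
  rw [hSy] at hnot
  exact hnot hmem

lemma kernel_flat {n r : ℕ} {ε : ℝ} (hε : 0 < ε) (hε4 : ε ≤ 1/4)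
    {S : Matrix (Fin r) (Fin n) ℝ} {f : (Fin r → ℝ) → Finset (Fin n)}
    (hf : ∀ x : Fin n → ℝ, x ≠ 0 → (∀ i, 0 ≤ x i) →
      (∀ i : Fin n, ε * (∑ j, |x j|) ≤ x i → i ∈ f (S.mulVec x)) ∧
      (∀ i : Fin n, x i < (ε / 2) * (∑ j, |x j|) → i ∉ f (S.mulVec x)))
    (z : Fin n → ℝ) (hker : S.mulVec z = 0) (hz : z ≠ 0)
    (j0 : Fin n) (hj0 : z j0 = 0) :
    ∀ i, |z i| ≤ ε * ∑ j, |z j| := by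
  set x : Fin n → ℝ := fun j => max (z j) 0 with hxdef
  set y : Fin n → ℝ := fun j => max (-z j) 0 with hydef
  have hxnn : ∀ j, 0 ≤ x j := fun j => le_max_right _ _
  have hynn : ∀ j, 0 ≤ y j := fun j => le_max_right _ _
  have hxy : ∀ j, x j - y j = z j := fun j => max_zero_sub_max_neg_zero_eq_self _
  have habs : ∀ j, |z j| = x j + y j := fun j =>
    (max_zero_add_max_neg_zero_eq_abs_self _).symm
  by_cases hx : x = 0
  · exfalso
    have hzneg : ∀ j, 0 ≤ -z j := by
      intro j
      have h1 := hxy j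
      have h2 := congrFun hx j
      simp only [Pi.zero_apply] at h2
      rw [h2] at h1
      have := hynn j
      linarith
    exact no_nonneg_kernel hε hε4 hf (-z) (by rw [Matrix.mulVec_neg, hker]; simp)
      (neg_ne_zero.mpr hz) hzneg j0 (by simp [hj0])
  by_cases hy : y = 0
  · exfalso
    have hzpos : ∀ j, 0 ≤ z j := by
      intro j
      have h1 := hxy j
      have h2 := congrFun hy j
      simp only [Pi.zero_apply] at h2
      rw [h2] at h1
      have := hxnn j
      linarith
    exact no_nonneg_kernel hε hε4 hf z hker hz hzpos j0 hj0
  -- main case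
  set Lx : ℝ := ∑ j, x j with hLx
  set Ly : ℝ := ∑ j, y j with hLy
  have hLxpos : 0 < Lx := sum_pos_of_nonneg_ne_zero x hxnn hx
  have hLypos : 0 < Ly := sum_pos_of_nonneg_ne_zero y hynn hy
  have hxsum : ∑ j, |x j| = Lx := Finset.sum_congr rfl fun j _ => abs_of_nonneg (hxnn j)
  have hysum : ∑ j, |y j| = Ly := Finset.sum_congr rfl fun j _ => abs_of_nonneg (hynn j)
  have hzsum : ∑ j, |z j| = Lx + Ly := by
    rw [Finset.sum_congr rfl fun j _ => habs j, Finset.sum_add_distrib]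
  have hSxy : S.mulVec x = S.mulVec y := by
    have : x - y = z := funext hxy
    have h := congrArg S.mulVec this
    rw [Matrix.mulVec_sub, hker, sub_eq_zero] at h
    exact h
  intro i
  by_contra hcon
  push_neg at hcon
  rw [hzsum] at hcon
  rcases le_or_gt (z i) 0 with h | h
  · -- z i ≤ 0 : i heavy for y, zero in x
    have hyi : y i = -z i := by simp [hydef, max_eq_left (by linarith : (0:ℝ) ≤ -z i)]
    have hxi : x i = 0 := by simp [hxdef, max_eq_right h]
    have hzi : |z i| = -z i := abs_of_nonpos h
    have hi : i ∈ f (S.mulVec y) := by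
      refine (hf y hy hynn).1 i ?_
      rw [hysum, hyi]
      nlinarith
    have hni : i ∉ f (S.mulVec x) := by
      refine (hf x hx hxnn).2 i ?_
      rw [hxsum, hxi]
      positivity
    rw [hSxy] at hni
    exact hni hi
  · have hxi : x i = z i := by simp [hxdef, max_eq_left h.le]
    have hyi : y i = 0 := by simp [hydef, max_eq_right (by linarith : -z i ≤ 0)]
    have hzi : |z i| = z i := abs_of_pos h
    have hi : i ∈ f (S.mulVec x) := by
      refine (hf x hx hxnn).1 i ?_
      rw [hxsum, hxi]
      nlinarith
    have hni : i ∉ f (S.mulVec y) := by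
      refine (hf y hy hynn).2 i ?_
      rw [hysum, hyi]
      positivity
    rw [← hSxy] at hni
    exact hni hi

lemma flat_subspace_finrank_le (m : ℕ) (ε : ℝ) (hε : 0 < ε)
    (V : Submodule ℝ (EuclideanSpace ℝ (Fin m)))
    (hflat : ∀ z : EuclideanSpace ℝ (Fin m), z ∈ V → z ≠ 0 →
      ∀ i, |z i| ≤ ε * ∑ j, |z j|) :
    (finrank ℝ V : ℝ) ≤ ε ^ 2 * m ^ 2 := by
  set d := finrank ℝ V with hd
  set b := stdOrthonormalBasis ℝ V with hb
  set v : Fin d → EuclideanSpace ℝ (Fin m) := fun k => (b k : EuclideanSpace ℝ (Fin m)) with hv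
  have hvV : ∀ k, v k ∈ V := fun k => (b k).2
  have hδ : ∀ k l, ∑ i, v k i * v l i = if k = l then 1 else 0 := by
    intro k l
    have horth := b.orthonormal
    rw [orthonormal_iff_ite] at horth
    have := horth k l
    rw [Submodule.coe_inner] at this
    simpa [PiLp.inner_apply, RCLike.inner_apply, mul_comm] using this
  set t : Fin m → ℝ := fun i => ∑ k, v k i ^ 2 with ht
  have htnn : ∀ i, 0 ≤ t i := fun i => Finset.sum_nonneg fun k _ => sq_nonneg _
  have hsum_t : ∑ i, t i = (d : ℝ) := by
    rw [ht]
    rw [Finset.sum_comm]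
    have : ∀ k : Fin d, ∑ i, v k i ^ 2 = 1 := by
      intro k
      have := hδ k k
      simpa [sq] using this
    simp [this]
  have hbound : ∀ i, t i ≤ ε ^ 2 * m := by
    intro i0
    set w : EuclideanSpace ℝ (Fin m) := ∑ k, v k i0 • v k with hw
    have hwV : w ∈ V := Submodule.sum_mem _ fun k _ => Submodule.smul_mem _ _ (hvV k)
    have hwap : ∀ i, w i = ∑ k, v k i0 * v k i := by
      intro i
      rw [hw]
      induction' (Finset.univ : Finset (Fin d)) using Finset.induction with k s hk ih
      · rfl
      · rw [Finset.sum_insert hk, Finset.sum_insert hk, ← ih]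
        rfl
    have hw2 : ∑ i, w i ^ 2 = t i0 := by
      have e1 : ∀ i, w i ^ 2 = ∑ k, ∑ l, (v k i0 * v l i0) * (v k i * v l i) := by
        intro i
        rw [hwap, sq, Finset.sum_mul_sum]
        exact Finset.sum_congr rfl fun k _ => Finset.sum_congr rfl fun l _ => by ring
      calc ∑ i, w i ^ 2 = ∑ i, ∑ k, ∑ l, (v k i0 * v l i0) * (v k i * v l i) :=
            Finset.sum_congr rfl fun i _ => e1 i
        _ = ∑ k, ∑ i, ∑ l, (v k i0 * v l i0) * (v k i * v l i) := Finset.sum_comm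
        _ = ∑ k, ∑ l, ∑ i, (v k i0 * v l i0) * (v k i * v l i) :=
            Finset.sum_congr rfl fun k _ => Finset.sum_comm
        _ = ∑ k, ∑ l, (v k i0 * v l i0) * ∑ i, v k i * v l i :=
            Finset.sum_congr rfl fun k _ => Finset.sum_congr rfl fun l _ =>
              (Finset.mul_sum _ _ _).symm
        _ = ∑ k, ∑ l, (v k i0 * v l i0) * (if k = l then 1 else 0) :=
            Finset.sum_congr rfl fun k _ => Finset.sum_congr rfl fun l _ => by rw [hδ]
        _ = ∑ k, v k i0 * v k i0 := by
            refine Finset.sum_congr rfl fun k _ => ?_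
            simp
        _ = t i0 := by rw [ht]; exact Finset.sum_congr rfl fun k _ => (sq _).symm
    have hwi0 : w i0 = t i0 := by
      rw [hwap, ht]
      exact Finset.sum_congr rfl fun k _ => (sq _).symm
    by_cases hw0 : w = 0
    · have : t i0 = 0 := by rw [← hwi0, hw0]; rfl
      rw [this]
      positivity
    · have hL := hflat w hwV hw0 i0
      set L : ℝ := ∑ j, |w j| with hLdef
      have hLnn : 0 ≤ L := Finset.sum_nonneg fun j _ => abs_nonneg _
      have hCS : L ^ 2 ≤ m * t i0 := by
        have := sq_sum_le_card_mul_sum_sq (s := Finset.univ) (f := fun j => |w j|)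
        simpa [hw2, sq_abs] using this
      have ht1 : t i0 ≤ ε * L := le_trans (le_abs_self _) (hwi0 ▸ hL)
      rcases eq_or_lt_of_le (htnn i0) with h0 | h0
      · rw [← h0]; positivity
      · have h3 : t i0 * t i0 ≤ (ε ^ 2 * m) * t i0 := by nlinarith
        exact le_of_mul_le_mul_right (by linarith [h3]) h0
  calc (d : ℝ) = ∑ i, t i := hsum_t.symm
    _ ≤ ∑ _i : Fin m, ε ^ 2 * m := Finset.sum_le_sum fun i _ => hbound i
    _ = ε ^ 2 * m ^ 2 := by simp [sq]; ring

set_option maxHeartbeats 1000000 in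
/-- Deterministic lower bound in the strict turnstile model under Guarantees 1, 2:
any sketch from which all `ε`-heavy hitters (and no non-`ε/2`-heavy hitters) of every
nonnegative vector can be recovered must have `Ω(ε⁻²)` rows. -/
theorem det_lower_bound_strict_turnstile :
    ∃ c C : ℝ, 0 < c ∧ 0 < C ∧
      ∀ (ε : ℝ), 0 < ε → ε ≤ 1/4 →
      ∀ (n r : ℕ), 0 < n → 0 < r → (C / ε ^ 2 ≤ (n : ℝ)) →
      ∀ (S : Matrix (Fin r) (Fin n) ℝ)
        (f : (Fin r → ℝ) → Finset (Fin n)),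
        (∀ x : Fin n → ℝ, x ≠ 0 → (∀ i, 0 ≤ x i) →
          (∀ i : Fin n, ε * (∑ j, |x j|) ≤ x i → i ∈ f (S.mulVec x)) ∧
          (∀ i : Fin n, x i < (ε / 2) * (∑ j, |x j|) → i ∉ f (S.mulVec x))) →
        c / ε ^ 2 ≤ (r : ℝ) := by
  refine ⟨1/8, 1, by norm_num, by norm_num, ?_⟩
  intro ε hε hε4 n r hn hr hCn S f hf
  have hε2 : ε ^ 2 ≤ 1/16 := by nlinarith
  set m : ℕ := ⌊1 / (2 * ε ^ 2)⌋₊ with hm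
  have hm_le : (m : ℝ) ≤ 1 / (2 * ε ^ 2) := Nat.floor_le (by positivity)
  have hm_gt : 1 / (2 * ε ^ 2) < (m : ℝ) + 1 := by
    have h := Nat.lt_floor_add_one (1 / (2 * ε ^ 2))
    rw [← hm] at h
    exact h
  have hmn : m < n := by
    have h1 : (m : ℝ) < (n : ℝ) := by
      have : 1 / ε ^ 2 ≤ (n : ℝ) := hCn
      have h2 : 1 / (2 * ε ^ 2) < 1 / ε ^ 2 := by
        rw [div_lt_div_iff₀ (by positivity) (by positivity)]
        nlinarith
      linarith
    exact_mod_cast h1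
  -- the extension-by-zero linear map
  have hnm : m + (n - m) = n := by omega
  set e : Fin m ⊕ Fin (n - m) ≃ Fin n := finSumFinEquiv.trans (finCongr hnm) with he
  set J : EuclideanSpace ℝ (Fin m) →ₗ[ℝ] (Fin n → ℝ) :=
    { toFun := fun z => fun j => Sum.elim (fun i => z i) 0 (e.symm j)
      map_add' := by
        intro z w
        funext j
        cases h : e.symm j <;> simp [h]
      map_smul' := by
        intro c z
        funext j
        cases h : e.symm j <;> simp [h] } with hJ
  have hJ_inl : ∀ (z : EuclideanSpace ℝ (Fin m)) (i : Fin m), J z (e (Sum.inl i)) = z i := by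
    intro z i
    simp [hJ]
  have hJ_inr : ∀ (z : EuclideanSpace ℝ (Fin m)) (a : Fin (n - m)), J z (e (Sum.inr a)) = 0 := by
    intro z a
    simp [hJ]
  set T : EuclideanSpace ℝ (Fin m) →ₗ[ℝ] (Fin r → ℝ) := (Matrix.mulVecLin S).comp J with hT
  set V : Submodule ℝ (EuclideanSpace ℝ (Fin m)) := LinearMap.ker T with hV
  set d : ℕ := finrank ℝ V with hd
  -- rank-nullity
  have hrank : (m : ℝ) ≤ (d : ℝ) + (r : ℝ) := by
    have h1 : finrank ℝ (LinearMap.range T) + finrank ℝ (LinearMap.ker T) = m := by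
      rw [LinearMap.finrank_range_add_finrank_ker T, finrank_euclideanSpace_fin]
    have hdk : finrank ℝ (LinearMap.ker T) = d := rfl
    have h2 : finrank ℝ (LinearMap.range T) ≤ r := by
      have := Submodule.finrank_le (LinearMap.range T)
      rwa [Module.finrank_fin_fun] at this
    have : m ≤ d + r := by omega
    exact_mod_cast this
  -- flatness of V
  have hflat : ∀ z : EuclideanSpace ℝ (Fin m), z ∈ V → z ≠ 0 →
      ∀ i, |z i| ≤ ε * ∑ j, |z j| := by
    intro z hzV hz i
    set w : Fin n → ℝ := J z with hwdef
    have hw_at : ∀ i' : Fin m, w (e (Sum.inl i')) = z i' := fun i' => hJ_inl z i'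
    have hw_inr : ∀ a : Fin (n - m), w (e (Sum.inr a)) = 0 := fun a => hJ_inr z a
    have hker : S.mulVec w = 0 := by
      have h0 : T z = 0 := hzV
      rw [hT] at h0
      simpa [Matrix.mulVecLin_apply, hwdef] using h0
    have hw0 : w ≠ 0 := by
      intro h
      apply hz
      ext i'
      have h2 := congrFun h (e (Sum.inl i'))
      rw [hw_at] at h2
      simpa using h2
    have hj0 : w (e (Sum.inr ⟨0, by omega⟩)) = 0 := hw_inr _
    have hall := kernel_flat hε hε4 hf w hker hw0 _ hj0
    have hsum : ∑ j : Fin n, |w j| = ∑ j : Fin m, |z j| := by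
      rw [← Equiv.sum_comp e (fun j => |w j|), Fintype.sum_sum_type]
      simp [hw_at, hw_inr]
    have h3 := hall (e (Sum.inl i))
    rw [hw_at, hsum] at h3
    exact h3
  have hdim : (d : ℝ) ≤ ε ^ 2 * m ^ 2 := flat_subspace_finrank_le m ε hε V hflat
  -- final arithmetic
  rw [div_le_iff₀ (by positivity)]
  have h1 : ε ^ 2 * (m : ℝ) ≤ 1 / 2 := by
    have := hm_le
    rw [le_div_iff₀ (by positivity)] at this
    linarith
  have hA : ε ^ 2 * (m : ℝ) ^ 2 ≤ (m : ℝ) / 2 := by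
    nlinarith [(Nat.cast_nonneg m : (0:ℝ) ≤ (m:ℝ)), h1]
  have hB : (m : ℝ) / 2 ≤ (r : ℝ) := by linarith
  have hC : 1 / 2 ≤ ε ^ 2 * (m : ℝ) + ε ^ 2 := by
    have h4 : (1 : ℝ) < ((m : ℝ) + 1) * (2 * ε ^ 2) := by
      have := (div_lt_iff₀ (by positivity : (0:ℝ) < 2 * ε ^ 2)).mp hm_gt
      linarith
    nlinarith
  nlinarith [hC, mul_le_mul_of_nonneg_left hB (sq_nonneg ε), hε2]
end

section
/- For every constant K ≥ 1 there exist constants c, C > 0 (depending only on K) with the following property. Let ε ∈ (0, 1/4], let n and r be positive integers with n ≥ C·max(ε^{-2}, K·ε^{-1}), and let S be a real r × n matrix. Suppose there is a function f mapping ℝ^r to finite subsets of {1,…,n} such that |f(y)| ≤ K/ε for every y ∈ ℝ^r, and for every nonzero vector x ∈ ℝ^n, f(Sx) contains every index i with |x_i| ≥ ε·‖x‖₁. Then r ≥ c·ε^{-2}. -/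
set_option maxHeartbeats 1000000

open Finset Module

lemma hh_ortho_expand {ι m : Type*} [Fintype ι] [DecidableEq ι] [Fintype m] (g : ι → m → ℝ)
    (h : ∀ k l, ∑ i, g k i * g l i = if k = l then (1:ℝ) else 0) (a : ι → ℝ) :
    ∑ i, (∑ k, a k * g k i) ^ 2 = ∑ k, (a k) ^ 2 := by
  have e1 : ∀ i : m, (∑ k, a k * g k i) ^ 2 = ∑ k, ∑ l, (a k * a l) * (g k i * g l i) := by
    intro i
    rw [sq, Finset.sum_mul_sum]
    congr 1; ext k; congr 1; ext l; ring
  simp_rw [e1]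
  rw [Finset.sum_comm]
  have e2 : ∀ k : ι, ∑ i, ∑ l, (a k * a l) * (g k i * g l i) = (a k)^2 := by
    intro k
    rw [Finset.sum_comm]
    have e3 : ∀ l : ι, ∑ i, (a k * a l) * (g k i * g l i) = (a k * a l) * ∑ i, g k i * g l i := by
      intro l; rw [Finset.mul_sum]
    simp_rw [e3, h]
    simp [sq]
  simp_rw [e2]

lemma hh_flat_dim (n : ℕ) (B : Finset (Fin n)) (V : Submodule ℝ (EuclideanSpace ℝ (Fin n)))
    (ε : ℝ) (hε : 0 < ε)
    (hsupp : ∀ x ∈ V, ∀ i : Fin n, i ∉ B → x i = 0)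
    (hflat : ∀ x ∈ V, x ≠ 0 → ∀ i ∈ B, |x i| < ε * ∑ j, |x j|) :
    (finrank ℝ V : ℝ) ≤ ε ^ 2 * B.card * B.card := by
  classical
  set d := finrank ℝ V with hd
  obtain ⟨g, hgmem, hgk, hortho⟩ :
      ∃ g : Fin d → Fin n → ℝ,
        (∀ a : Fin d → ℝ, WithLp.toLp 2 (fun i => ∑ k, a k * g k i) ∈ V) ∧
        (∀ k, WithLp.toLp 2 (g k) ∈ V) ∧
        (∀ k l, ∑ i, g k i * g l i = if k = l then (1:ℝ) else 0) := by
    let u := stdOrthonormalBasis ℝ V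
    refine ⟨fun k => WithLp.ofLp ((u k : EuclideanSpace ℝ (Fin n))), ?_, fun k => Submodule.coe_mem (u k), ?_⟩
    · intro a
      have hmem := Submodule.sum_mem V
        (fun k (_ : k ∈ Finset.univ) => V.smul_mem (a k) (Submodule.coe_mem (u k)))
      have heq : WithLp.toLp 2 (fun i => ∑ k, a k * (u k : EuclideanSpace ℝ (Fin n)) i)
          = (∑ k : Fin d, a k • ((u k : EuclideanSpace ℝ (Fin n)))) := by
        ext i
        have h2 : (∑ k : Fin d, a k • ((u k : EuclideanSpace ℝ (Fin n)))) i
            = ∑ k : Fin d, (a k • ((u k : EuclideanSpace ℝ (Fin n)))) i :=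
          by simp
        rw [h2]
        simp [PiLp.smul_apply, smul_eq_mul]
      rw [heq]; exact hmem
    · intro k l
      have h := (orthonormal_iff_ite.mp u.orthonormal) k l
      rw [Submodule.coe_inner, PiLp.inner_apply] at h
      simpa [RCLike.inner_apply, conj_trivial, mul_comm] using h
  have hpnn : ∀ j : Fin n, (0:ℝ) ≤ ∑ k, (g k j) ^ 2 :=
    fun j => Finset.sum_nonneg fun k _ => sq_nonneg _
  have hsum_p : ∑ j, ∑ k, (g k j) ^ 2 = (d : ℝ) := by
    rw [Finset.sum_comm]
    have e : ∀ k, ∑ j, (g k j)^2 = (1:ℝ) := by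
      intro k; have := hortho k k; simpa [sq] using this
    simp [e]
  have hpB : ∀ j ∈ B, ∑ k, (g k j) ^ 2 ≤ ε ^ 2 * B.card := by
    intro j hj
    rcases eq_or_lt_of_le (hpnn j) with h0 | hpos
    · rw [← h0]; positivity
    · set x : EuclideanSpace ℝ (Fin n) := WithLp.toLp 2 (fun i => ∑ k, g k j * g k i) with hxdef
      have hxmem : x ∈ V := hgmem _
      have hxj : x j = ∑ k, (g k j) ^ 2 := by simp [hxdef, sq]
      have hx2 : ∑ i, (x i)^2 = ∑ k, (g k j) ^ 2 := hh_ortho_expand g hortho _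
      have hxne : x ≠ 0 := by
        intro h
        have h0 : x j = 0 := by rw [h]; rfl
        exact hpos.ne' (hxj.symm.trans h0)
      have hlt := hflat x hxmem hxne j hj
      rw [hxj, abs_of_nonneg (hpnn j)] at hlt
      have hsum1 : ∑ i, |x i| = ∑ i ∈ B, |x i| := by
        rw [← Finset.sum_subset (Finset.subset_univ B)]
        intro i _ hiB
        rw [hsupp x hxmem i hiB, abs_zero]
      have hcs : (∑ i ∈ B, |x i|)^2 ≤ (B.card : ℝ) * ∑ i ∈ B, |x i|^2 :=
        sq_sum_le_card_mul_sum_sq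
      have hle2 : ∑ i ∈ B, |x i|^2 ≤ ∑ k, (g k j) ^ 2 := by
        rw [← hx2]
        have e : ∀ i, |x i|^2 = (x i)^2 := fun i => sq_abs _
        simp_rw [e]
        exact Finset.sum_le_sum_of_subset_of_nonneg (Finset.subset_univ B)
          (fun i _ _ => sq_nonneg _)
      rw [hsum1] at hlt
      have hsnn : 0 ≤ ∑ i ∈ B, |x i| := Finset.sum_nonneg fun i _ => abs_nonneg _
      have h1 : (∑ k, (g k j) ^ 2) * (∑ k, (g k j) ^ 2)
          < (ε * ∑ i ∈ B, |x i|) * (ε * ∑ i ∈ B, |x i|) :=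
        mul_self_lt_mul_self (hpnn j) hlt
      nlinarith [h1, hpos,
        mul_le_mul_of_nonneg_left hcs (sq_nonneg ε),
        mul_le_mul_of_nonneg_left hle2 (show (0:ℝ) ≤ ε^2 * (B.card:ℝ) from mul_nonneg (sq_nonneg ε) (Nat.cast_nonneg _))]
  have hzero : ∀ j : Fin n, j ∉ B → ∑ k, (g k j) ^ 2 = 0 := by
    intro j hj
    have e : ∀ k, g k j = 0 := fun k => hsupp _ (hgk k) j hj
    simp [e]
  calc (d : ℝ) = ∑ j, ∑ k, (g k j) ^ 2 := hsum_p.symm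
    _ = ∑ j ∈ B, ∑ k, (g k j) ^ 2 := by
        rw [← Finset.sum_subset (Finset.subset_univ B)]
        intro i _ hiB; exact hzero i hiB
    _ ≤ ∑ _j ∈ B, ε^2 * B.card := Finset.sum_le_sum hpB
    _ = ε^2 * B.card * B.card := by rw [Finset.sum_const]; ring

/-- Deterministic lower bound in the general turnstile model under Guarantee 3:
any sketch from which one can always recover a set of size at most `K/ε` containing
all `ε`-heavy hitters (in ℓ₁ norm) of every real vector must have `Ω(ε⁻²)` rows. -/
theorem det_lower_bound_turnstile_guarantee3 :
    ∀ K : ℝ, 1 ≤ K →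
    ∃ c C : ℝ, 0 < c ∧ 0 < C ∧
      ∀ (ε : ℝ), 0 < ε → ε ≤ 1/4 →
      ∀ (n r : ℕ), 0 < n → 0 < r →
        (C * max (ε⁻¹ ^ 2) (K * ε⁻¹) ≤ (n : ℝ)) →
      ∀ (S : Matrix (Fin r) (Fin n) ℝ)
        (f : (Fin r → ℝ) → Finset (Fin n)),
        (∀ y : Fin r → ℝ, ((f y).card : ℝ) ≤ K / ε) →
        (∀ x : Fin n → ℝ, x ≠ 0 →
          ∀ i : Fin n, ε * (∑ j, |x j|) ≤ |x i| → i ∈ f (S.mulVec x)) →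
        c / ε ^ 2 ≤ (r : ℝ) := by
  classical
  intro K hK
  refine ⟨1/16, 2, by norm_num, by norm_num, ?_⟩
  intro ε hε hε4 n r hn hr hC S f hcard hrec
  have hε2 : (0:ℝ) < ε^2 := by positivity
  set b : ℕ := ⌊1/(4*ε^2)⌋₊ with hbdef
  have hble : (b:ℝ) ≤ 1/(4*ε^2) := Nat.floor_le (by positivity)
  have hεsq16 : ε^2 ≤ 1/16 := by nlinarith
  have h8 : (1:ℝ) ≤ 1/(8*ε^2) := by
    rw [le_div_iff₀ (by positivity)]; nlinarith
  have hbge : 1/(8*ε^2) ≤ (b:ℝ) := by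
    have h2 := Nat.sub_one_lt_floor (1/(4*ε^2))
    have h3 : 1/(8*ε^2) + 1/(8*ε^2) = 1/(4*ε^2) := by field_simp; ring
    rw [← hbdef] at h2
    nlinarith
  -- n is large enough
  have hmax1 : ε⁻¹^2 ≤ max (ε⁻¹^2) (K*ε⁻¹) := le_max_left _ _
  have hmax2 : K*ε⁻¹ ≤ max (ε⁻¹^2) (K*ε⁻¹) := le_max_right _ _
  have hn' : 1/ε^2 + K/ε ≤ (n:ℝ) := by
    have e1 : (1:ℝ)/ε^2 = ε⁻¹^2 := by field_simp
    have e2 : K/ε = K*ε⁻¹ := by field_simp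
    rw [e1, e2]
    nlinarith
  have hf0 : ((f 0).card : ℝ) ≤ K/ε := hcard 0
  have hbn : b + (f 0).card ≤ n := by
    have h1 : (b:ℝ) + ((f 0).card : ℝ) ≤ (n:ℝ) := by
      have : (1:ℝ)/(4*ε^2) ≤ 1/ε^2 := by
        rw [div_le_div_iff₀ (by positivity) (by positivity)]; nlinarith
      nlinarith
    exact_mod_cast h1
  obtain ⟨B, hBsub, hBcard⟩ := Finset.exists_subset_card_eq (s := Finset.univ \ f 0) (n := b)
    (by
      rw [Finset.card_sdiff_of_subset (Finset.subset_univ _), Finset.card_univ, Fintype.card_fin]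
      omega)
  have hBf0 : ∀ j ∈ B, j ∉ f 0 := fun j hj => (Finset.mem_sdiff.mp (hBsub hj)).2
  -- the linear map and the subspace
  let L : EuclideanSpace ℝ (Fin n) →ₗ[ℝ] (Fin r → ℝ) :=
    (Matrix.mulVecLin S).comp (WithLp.linearEquiv 2 ℝ (Fin n → ℝ)).toLinearMap
  let J : (↥B → ℝ) →ₗ[ℝ] EuclideanSpace ℝ (Fin n) :=
    { toFun := fun y => WithLp.toLp 2 (fun i => if h : i ∈ B then y ⟨i, h⟩ else 0 : Fin n → ℝ)
      map_add' := by
        intro y z; ext i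
        by_cases h : i ∈ B <;> simp [h, PiLp.add_apply]
      map_smul' := by
        intro c y; ext i
        by_cases h : i ∈ B <;> simp [h, PiLp.smul_apply] }
  have hJapp : ∀ (y : ↥B → ℝ) (i : Fin n), J y i = if h : i ∈ B then y ⟨i, h⟩ else 0 :=
    fun y i => rfl
  have hJinj : Function.Injective J := by
    intro y z h
    funext j
    have := congrFun (congrArg (fun (v : EuclideanSpace ℝ (Fin n)) => (v : Fin n → ℝ)) h) j
    simpa [hJapp, j.2] using this
  set V : Submodule ℝ (EuclideanSpace ℝ (Fin n)) := LinearMap.range J ⊓ LinearMap.ker L with hVdef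
  have hV_supp : ∀ x ∈ V, ∀ i : Fin n, i ∉ B → x i = 0 := by
    intro x hx i hi
    obtain ⟨y, hy⟩ := hx.1
    rw [← hy, hJapp, dif_neg hi]
  have hV_ker : ∀ x ∈ V, S.mulVec x = 0 := by
    intro x hx
    exact hx.2
  have hflat : ∀ x ∈ V, x ≠ 0 → ∀ i ∈ B, |x i| < ε * ∑ j, |x j| := by
    intro x hx hx0 i hiB
    by_contra hcon
    push_neg at hcon
    have hmem := hrec x (fun h => hx0 (WithLp.ofLp_injective 2 (h.trans rfl))) i hcon
    rw [hV_ker x hx] at hmem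
    exact hBf0 i hiB hmem
  have hdim : (finrank ℝ V : ℝ) ≤ ε^2 * b * b := by
    have := hh_flat_dim n B V ε hε hV_supp hflat
    rwa [hBcard] at this
  -- rank-nullity chain
  haveI : FiniteDimensional ℝ (EuclideanSpace ℝ (Fin n)) := by infer_instance
  have hW : finrank ℝ (LinearMap.range J) = b := by
    rw [LinearMap.finrank_range_of_inj hJinj, Module.finrank_fintype_fun_eq_card,
      Fintype.card_coe, hBcard]
  have e1 : finrank ℝ ↥(LinearMap.range J ⊔ LinearMap.ker L) + finrank ℝ V
      = b + finrank ℝ (LinearMap.ker L) := by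
    rw [hVdef, ← hW]
    exact Submodule.finrank_sup_add_finrank_inf_eq _ _
  have e2 : finrank ℝ ↥(LinearMap.range J ⊔ LinearMap.ker L) ≤ n := by
    have := Submodule.finrank_le (LinearMap.range J ⊔ LinearMap.ker L)
    rwa [finrank_euclideanSpace_fin] at this
  have e3 : finrank ℝ (LinearMap.range L) + finrank ℝ (LinearMap.ker L) = n := by
    have := LinearMap.finrank_range_add_finrank_ker L
    rwa [finrank_euclideanSpace_fin] at this
  have e4 : finrank ℝ (LinearMap.range L) ≤ r := by
    have := Submodule.finrank_le (LinearMap.range L)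
    rwa [Module.finrank_fintype_fun_eq_card, Fintype.card_fin] at this
  have hbr : b ≤ finrank ℝ V + r := by omega
  -- final numeric computation
  have hbrR : (b:ℝ) ≤ (finrank ℝ V : ℝ) + r := by exact_mod_cast hbr
  have hq : ε^2 * (b:ℝ) ≤ 1/4 := by
    have h := mul_le_mul_of_nonneg_left hble hε2.le
    have h2 : ε^2 * (1/(4*ε^2)) = 1/4 := by field_simp
    linarith
  have hrb : (3:ℝ)/4 * b ≤ r := by nlinarith [hdim, hbrR, hq, Nat.cast_nonneg (α := ℝ) b]
  have : (1:ℝ)/16 / ε^2 ≤ 3/4 * (1/(8*ε^2)) := by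
    have e1 : (1:ℝ)/16 / ε^2 = 1/(16*ε^2) := by ring
    have e2 : (3:ℝ)/4 * (1/(8*ε^2)) = 3/(32*ε^2) := by ring
    rw [e1, e2, div_le_div_iff₀ (by positivity) (by positivity)]
    nlinarith
  nlinarith [hbge, hrb]
end

section
/- Let r be a positive integer and τ ∈ ℝ^r. Then the total variation distance between the standard Gaussian measure N(0, I_r) on ℝ^r and its shift N(τ, I_r) (the distribution of τ + g with g ∼ N(0, I_r)) equals the probability that a standard real Gaussian g ∼ N(0,1) satisfies |g| ≤ ‖τ‖₂/2. -/
open MeasureTheory ProbabilityTheory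

/-- Total variation distance between probability measures:
`sup_A |μ(A) − ν(A)|` over measurable sets `A`. -/
noncomputable def tvDist {Ω : Type*} [MeasurableSpace Ω] (μ ν : Measure Ω) : ℝ :=
  ⨆ A : {A : Set Ω // MeasurableSet A}, |(μ (A : Set Ω)).toReal - (ν (A : Set Ω)).toReal|

open Real
open scoped NNReal ENNReal

lemma sqrt_norm_eq (a b : ℝ) (ha : 0 < a) (hb : 0 < b) :
    Real.sqrt (2*π*a) * Real.sqrt (2*π*b) =
      Real.sqrt (2*π*(a+b)) * Real.sqrt (2*π*(a*b/(a+b))) := by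
  rw [← Real.sqrt_mul (by positivity), ← Real.sqrt_mul (by positivity)]
  congr 1
  field_simp

lemma pdf_prod_identity (v₁ v₂ : ℝ≥0) (h₁ : v₁ ≠ 0) (h₂ : v₂ ≠ 0) (z x : ℝ) :
    gaussianPDFReal 0 v₁ x * gaussianPDFReal 0 v₂ (z - x) =
      gaussianPDFReal 0 (v₁ + v₂) z * gaussianPDFReal (z * v₁ / (v₁ + v₂)) (v₁ * v₂ / (v₁ + v₂)) x := by
  have ha : (0:ℝ) < v₁ := lt_of_le_of_ne (v₁.coe_nonneg) (by exact_mod_cast (Ne.symm h₁))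
  have hb : (0:ℝ) < v₂ := lt_of_le_of_ne (v₂.coe_nonneg) (by exact_mod_cast (Ne.symm h₂))
  simp only [gaussianPDFReal, NNReal.coe_add, NNReal.coe_div, NNReal.coe_mul]
  rw [mul_mul_mul_comm, mul_mul_mul_comm ((Real.sqrt (2*π*((v₁:ℝ)+v₂)))⁻¹)]
  congr 1
  · rw [← mul_inv, ← mul_inv, sqrt_norm_eq _ _ ha hb]
  · rw [← Real.exp_add, ← Real.exp_add]
    congr 1
    have hab : (0:ℝ) < (v₁:ℝ) + v₂ := by positivity
    field_simp
    ring

lemma gaussianPDF_measurable2 (v : ℝ≥0) :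
    Measurable fun p : ℝ × ℝ => gaussianPDF p.1 v p.2 := by
  have hc : Continuous fun p : ℝ × ℝ => gaussianPDFReal p.1 v p.2 := by
    unfold gaussianPDFReal
    fun_prop
  exact ENNReal.measurable_ofReal.comp hc.measurable

lemma gaussian_conv (v₁ v₂ : ℝ≥0) :
    Measure.map (fun p : ℝ × ℝ => p.1 + p.2)
      ((gaussianReal 0 v₁).prod (gaussianReal 0 v₂)) = gaussianReal 0 (v₁ + v₂) := by
  by_cases h₁ : v₁ = 0
  · subst h₁
    rw [gaussianReal_zero_var, Measure.dirac_prod,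
      Measure.map_map measurable_add (measurable_prodMk_left), zero_add]
    have : ((fun p : ℝ × ℝ => p.1 + p.2) ∘ Prod.mk (0:ℝ)) = id := by
      funext y; simp
    rw [this, Measure.map_id]
  by_cases h₂ : v₂ = 0
  · subst h₂
    rw [gaussianReal_zero_var, Measure.prod_dirac,
      Measure.map_map measurable_add (measurable_prodMk_right), add_zero]
    have : ((fun p : ℝ × ℝ => p.1 + p.2) ∘ (fun x : ℝ => (x, (0:ℝ)))) = id := by
      funext y; simp
    rw [this, Measure.map_id]
  have h12 : v₁ + v₂ ≠ 0 := by positivity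
  have hw : v₁ * v₂ / (v₁ + v₂) ≠ 0 := by
    rw [div_ne_zero_iff]
    exact ⟨mul_ne_zero h₁ h₂, h12⟩
  ext s hs
  rw [Measure.map_apply measurable_add hs, gaussianReal_apply 0 h12 s,
    Measure.prod_apply (measurable_add hs)]
  have hpre : ∀ x : ℝ, (Prod.mk x ⁻¹' ((fun p : ℝ × ℝ => p.1 + p.2) ⁻¹' s)) = (x + ·) ⁻¹' s := by
    intro x; rfl
  have hinner : ∀ x : ℝ, gaussianReal 0 v₂ ((x + ·) ⁻¹' s) = ∫⁻ z in s, gaussianPDF x v₂ z := by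
    intro x
    rw [← Measure.map_apply (measurable_const_add x) hs, gaussianReal_map_const_add,
      zero_add, gaussianReal_apply x h₂ s]
  simp_rw [hpre, hinner]
  rw [gaussianReal_of_var_ne_zero 0 h₁]
  have hK := gaussianPDF_measurable2 v₂
  have hF : Measurable fun x : ℝ => ∫⁻ z in s, gaussianPDF x v₂ z := by
    exact Measurable.lintegral_prod_right hK
  rw [lintegral_withDensity_eq_lintegral_mul volume (measurable_gaussianPDF 0 v₁) hF]
  have hmul : ∀ x : ℝ, gaussianPDF 0 v₁ x * ∫⁻ z in s, gaussianPDF x v₂ z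
      = ∫⁻ z in s, gaussianPDF 0 v₁ x * gaussianPDF x v₂ z := by
    intro x
    have hm : Measurable fun z : ℝ => gaussianPDF x v₂ z := measurable_gaussianPDF x v₂
    exact (lintegral_const_mul (gaussianPDF 0 v₁ x) hm).symm
  simp only [Pi.mul_apply]
  simp_rw [hmul]
  rw [lintegral_lintegral_swap]
  swap
  · exact ((measurable_gaussianPDF 0 v₁).comp measurable_fst |>.mul
      (hK.comp (measurable_fst.prodMk measurable_snd)) |>.aemeasurable)
  have hpt : ∀ z x : ℝ, gaussianPDF 0 v₁ x * gaussianPDF x v₂ z =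
      gaussianPDF 0 (v₁ + v₂) z * gaussianPDF (z * v₁ / (v₁ + v₂)) (v₁ * v₂ / (v₁ + v₂)) x := by
    intro z x
    have hsub : gaussianPDFReal x v₂ z = gaussianPDFReal 0 v₂ (z - x) := by
      simp [gaussianPDFReal]
    rw [gaussianPDF_def, gaussianPDF_def, gaussianPDF_def, gaussianPDF_def]
    rw [← ENNReal.ofReal_mul (gaussianPDFReal_nonneg _ _ _),
      ← ENNReal.ofReal_mul (gaussianPDFReal_nonneg _ _ _), hsub,
      pdf_prod_identity v₁ v₂ h₁ h₂ z x]
  refine setLIntegral_congr_fun hs (fun z _ => ?_)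
  simp_rw [hpt z]
  rw [lintegral_const_mul _ (measurable_gaussianPDF _ _),
    lintegral_gaussianPDF_eq_one _ hw, mul_one]

lemma map_const_mul_gaussian (c : ℝ) :
    Measure.map (c * ·) (gaussianReal 0 1) = gaussianReal 0 (‖c‖₊ ^ 2) := by
  rw [gaussianReal_map_const_mul c, mul_zero]
  congr 1
  ext
  simp [NNReal.coe_pow, abs_sq, sq_abs]

lemma map_sum_pi_gaussian : ∀ (n : ℕ) (c : Fin n → ℝ),
    Measure.map (fun x : Fin n → ℝ => ∑ i, c i * x i)
      (Measure.pi fun _ : Fin n => gaussianReal 0 1) = gaussianReal 0 (∑ i, ‖c i‖₊ ^ 2) := by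
  intro n
  induction n with
  | zero =>
      intro c
      simp only [Finset.univ_eq_empty, Finset.sum_empty]
      rw [show (fun _ : Fin 0 → ℝ => (0:ℝ)) = fun _ => (0:ℝ) from rfl, Measure.map_const,
        measure_univ, one_smul, gaussianReal_zero_var]
  | succ n ih =>
      intro c
      have hmp := measurePreserving_piFinSuccAbove (fun _ : Fin (n+1) => gaussianReal 0 1) 0
      set e := MeasurableEquiv.piFinSuccAbove (fun _ : Fin (n+1) => ℝ) 0 with he
      have hS : Measurable fun x : Fin (n+1) → ℝ => ∑ i, c i * x i := by fun_prop
      have h1 : Measure.map (fun x : Fin (n+1) → ℝ => ∑ i, c i * x i)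
          (Measure.pi fun _ => gaussianReal 0 1)
          = Measure.map ((fun x : Fin (n+1) → ℝ => ∑ i, c i * x i) ∘ e.symm)
            ((gaussianReal 0 1).prod (Measure.pi fun _ : Fin n => gaussianReal 0 1)) := by
        rw [← hmp.map_eq, Measure.map_map (hS.comp e.symm.measurable) e.measurable]
        congr 1
        funext x
        simp
      rw [h1]
      have h2 : ((fun x : Fin (n+1) → ℝ => ∑ i, c i * x i) ∘ e.symm)
          = (fun p : ℝ × ℝ => p.1 + p.2) ∘
            (Prod.map (fun y : ℝ => c 0 * y) (fun x : Fin n → ℝ => ∑ j, c j.succ * x j)) := by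
        funext p
        simp only [Function.comp_apply, Prod.map_apply, he,
          MeasurableEquiv.piFinSuccAbove_symm_apply, Fin.insertNthEquiv, Fin.insertNth_zero,
          Equiv.coe_fn_mk]
        rw [Fin.sum_univ_succ]
        simp [Fin.cons_zero, Fin.cons_succ]
      rw [h2, ← Measure.map_map measurable_add (by fun_prop),
        ← Measure.map_prod_map _ _ (by fun_prop) (by fun_prop),
        map_const_mul_gaussian, ih, gaussian_conv, Fin.sum_univ_succ]

lemma lintegral_pi_gauss : ∀ (n : ℕ) (f : Fin n → ℝ → ℝ≥0∞), (∀ i, Measurable (f i)) →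
    ∫⁻ x, ∏ i, f i (x i) ∂(Measure.pi fun _ : Fin n => gaussianReal 0 1)
      = ∏ i, ∫⁻ t, f i t ∂(gaussianReal 0 1) := by
  intro n
  induction n with
  | zero =>
      intro f _
      simp only [Finset.univ_eq_empty, Finset.prod_empty]
      rw [lintegral_one, measure_univ]
  | succ n ih =>
      intro f hf
      have hmp := measurePreserving_piFinSuccAbove (fun _ : Fin (n+1) => gaussianReal 0 1) 0
      have hG : Measurable fun p : ℝ × (Fin n → ℝ) => f 0 p.1 * ∏ j, f j.succ (p.2 j) := by
        fun_prop
      have key : ∫⁻ x, ∏ i, f i (x i) ∂(Measure.pi fun _ : Fin (n+1) => gaussianReal 0 1)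
          = ∫⁻ p, f 0 p.1 * ∏ j, f j.succ (p.2 j)
            ∂((gaussianReal 0 1).prod (Measure.pi fun _ : Fin n => gaussianReal 0 1)) := by
        rw [← hmp.lintegral_comp hG]
        congr 1
        funext x
        simp only [MeasurableEquiv.piFinSuccAbove_apply, Fin.zero_succAbove]
        exact Fin.prod_univ_succ fun i => f i (x i)
      rw [key, lintegral_prod_mul (f := fun t => f 0 t)
        (g := fun x : Fin n → ℝ => ∏ j, f j.succ (x j)) (hf 0).aemeasurable (Finset.measurable_prod Finset.univ (fun j _ => (hf j.succ).comp (measurable_pi_apply j))).aemeasurable,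
        Fin.prod_univ_succ, ih (fun j => f j.succ) (fun j => hf j.succ)]

lemma pi_withDensity_eq (n : ℕ) (f : Fin n → ℝ → ℝ≥0∞) (hf : ∀ i, Measurable (f i))
    (ν : Fin n → Measure ℝ) [∀ i, SigmaFinite (ν i)]
    (h1 : ∀ i, (gaussianReal 0 1).withDensity (f i) = ν i) :
    (Measure.pi fun _ : Fin n => gaussianReal 0 1).withDensity (fun x => ∏ i, f i (x i))
      = Measure.pi ν := by
  refine (Measure.pi_eq fun s hs => ?_).symm
  rw [withDensity_apply _ (MeasurableSet.univ_pi hs),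
    ← lintegral_indicator (MeasurableSet.univ_pi hs) (fun x : Fin n → ℝ => ∏ i, f i (x i))]
  have hind : ∀ x : Fin n → ℝ,
      (Set.univ.pi s).indicator (fun x => ∏ i, f i (x i)) x
        = ∏ i, (s i).indicator (f i) (x i) := by
    intro x
    by_cases hx : x ∈ Set.univ.pi s
    · rw [Set.indicator_of_mem hx]
      exact Finset.prod_congr rfl fun i _ =>
        (Set.indicator_of_mem (hx i (Set.mem_univ i)) _).symm
    · rw [Set.indicator_of_notMem hx]
      rw [Set.mem_univ_pi, not_forall] at hx
      obtain ⟨i, hi⟩ := hx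
      exact (Finset.prod_eq_zero (Finset.mem_univ i) (Set.indicator_of_notMem hi _)).symm
  simp_rw [hind]
  rw [lintegral_pi_gauss n _ (fun i => (hf i).indicator (hs i))]
  exact Finset.prod_congr rfl fun i _ => by
    rw [lintegral_indicator (hs i) _, ← withDensity_apply _ (hs i), h1 i]

lemma tvDist_withDensity {Ω : Type*} [MeasurableSpace Ω] (μ : Measure Ω) [IsProbabilityMeasure μ]
    (ρ : Ω → ℝ≥0∞) (hρ : Measurable ρ) [IsProbabilityMeasure (μ.withDensity ρ)] :
    tvDist μ (μ.withDensity ρ) =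
      (μ {x | ρ x ≤ 1}).toReal - ((μ.withDensity ρ) {x | ρ x ≤ 1}).toReal := by
  set ν := μ.withDensity ρ with hν
  set A : Set Ω := {x | ρ x ≤ 1} with hAdef
  have hA : MeasurableSet A := measurableSet_le hρ measurable_const
  have hle : ∀ S : Set Ω, MeasurableSet S → S ⊆ A → ν S ≤ μ S := by
    intro S hS hSA
    rw [hν, withDensity_apply ρ hS]
    calc ∫⁻ x in S, ρ x ∂μ ≤ ∫⁻ _ in S, 1 ∂μ :=
          setLIntegral_mono measurable_const fun x hx => hSA hx
      _ = μ S := setLIntegral_one S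
  have hge : ∀ S : Set Ω, MeasurableSet S → S ⊆ Aᶜ → μ S ≤ ν S := by
    intro S hS hSA
    rw [hν, withDensity_apply ρ hS]
    calc μ S = ∫⁻ _ in S, 1 ∂μ := (setLIntegral_one S).symm
      _ ≤ ∫⁻ x in S, ρ x ∂μ :=
          setLIntegral_mono hρ fun x hx => le_of_lt (lt_of_not_ge (hSA hx))
  have claim : ∀ B : Set Ω, MeasurableSet B →
      (μ B).toReal - (ν B).toReal ≤ (μ A).toReal - (ν A).toReal := by
    intro B hB
    have h1 : μ (B ∩ A) + μ (B \ A) = μ B := measure_inter_add_diff B hA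
    have h2 : ν (B ∩ A) + ν (B \ A) = ν B := measure_inter_add_diff B hA
    have h3 : μ (A ∩ B) + μ (A \ B) = μ A := measure_inter_add_diff A hB
    have h4 : ν (A ∩ B) + ν (A \ B) = ν A := measure_inter_add_diff A hB
    have e1 : (μ B).toReal = (μ (B ∩ A)).toReal + (μ (B \ A)).toReal := by
      rw [← ENNReal.toReal_add (measure_ne_top _ _) (measure_ne_top _ _), h1]
    have e2 : (ν B).toReal = (ν (B ∩ A)).toReal + (ν (B \ A)).toReal := by
      rw [← ENNReal.toReal_add (measure_ne_top _ _) (measure_ne_top _ _), h2]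
    have e3 : (μ A).toReal = (μ (A ∩ B)).toReal + (μ (A \ B)).toReal := by
      rw [← ENNReal.toReal_add (measure_ne_top _ _) (measure_ne_top _ _), h3]
    have e4 : (ν A).toReal = (ν (A ∩ B)).toReal + (ν (A \ B)).toReal := by
      rw [← ENNReal.toReal_add (measure_ne_top _ _) (measure_ne_top _ _), h4]
    have i1 : (μ (B \ A)).toReal ≤ (ν (B \ A)).toReal :=
      ENNReal.toReal_le_toReal (measure_ne_top _ _) (measure_ne_top _ _) |>.mpr
        (hge _ (hB.diff hA) (Set.diff_subset_compl B A))
    have i2 : (ν (A \ B)).toReal ≤ (μ (A \ B)).toReal :=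
      ENNReal.toReal_le_toReal (measure_ne_top _ _) (measure_ne_top _ _) |>.mpr
        (hle _ (hA.diff hB) Set.diff_subset)
    have hcomm : B ∩ A = A ∩ B := Set.inter_comm B A
    rw [e1, e2, e3, e4, hcomm]
    linarith
  have hD0 : 0 ≤ (μ A).toReal - (ν A).toReal := by
    have := claim ∅ MeasurableSet.empty
    simpa using this
  have habs : ∀ B : Set Ω, MeasurableSet B →
      |(μ B).toReal - (ν B).toReal| ≤ (μ A).toReal - (ν A).toReal := by
    intro B hB
    rw [abs_le]
    refine ⟨?_, claim B hB⟩
    have hc := claim Bᶜ hB.compl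
    have eμ : (μ Bᶜ).toReal = 1 - (μ B).toReal := by
      rw [measure_compl hB (measure_ne_top _ _), measure_univ,
        ENNReal.toReal_sub_of_le prob_le_one ENNReal.one_ne_top, ENNReal.toReal_one]
    have eν : (ν Bᶜ).toReal = 1 - (ν B).toReal := by
      rw [measure_compl hB (measure_ne_top _ _), measure_univ,
        ENNReal.toReal_sub_of_le prob_le_one ENNReal.one_ne_top, ENNReal.toReal_one]
    rw [eμ, eν] at hc
    linarith
  have hbdd : BddAbove (Set.range fun B : {A : Set Ω // MeasurableSet A} =>
      |(μ (B : Set Ω)).toReal - (ν (B : Set Ω)).toReal|) := by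
    refine ⟨(μ A).toReal - (ν A).toReal, ?_⟩
    rintro x ⟨⟨B, hB⟩, rfl⟩
    exact habs B hB
  refine le_antisymm (ciSup_le fun B => habs B.1 B.2) ?_
  have := le_ciSup hbdd (⟨A, hA⟩ : {A : Set Ω // MeasurableSet A})
  calc (μ A).toReal - (ν A).toReal = |(μ A).toReal - (ν A).toReal| := (abs_of_nonneg hD0).symm
    _ ≤ _ := this

/-- The total variation distance between `N(0, I_r)` and its shift `N(τ, I_r)` equals
the probability that a standard real Gaussian `g` satisfies `|g| ≤ ‖τ‖₂ / 2`. -/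
theorem tv_between_gaussians (r : ℕ) (hr : 0 < r) (τ : Fin r → ℝ) :
    tvDist (Measure.pi fun _ : Fin r => gaussianReal 0 1)
        (Measure.map (fun g : Fin r → ℝ => fun i => τ i + g i)
          (Measure.pi fun _ : Fin r => gaussianReal 0 1)) =
      ((gaussianReal 0 1) {g : ℝ | |g| ≤ Real.sqrt (∑ i, (τ i)^2) / 2}).toReal := by
  set μ : Measure (Fin r → ℝ) := Measure.pi fun _ : Fin r => gaussianReal 0 1 with hμ
  by_cases h0 : ∀ i, τ i = 0
  · -- trivial case τ = 0
    have hmap : (fun g : Fin r → ℝ => fun i => τ i + g i) = id := by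
      funext g; funext i; simp [h0 i]
    rw [hmap, Measure.map_id]
    have hzero : tvDist μ μ = 0 := by
      unfold tvDist
      simp only [sub_self, abs_zero]
      exact ciSup_const
    rw [hzero]
    have hT : ∑ i, (τ i)^2 = 0 := by
      apply Finset.sum_eq_zero; intro i _; rw [h0 i]; ring
    rw [hT, Real.sqrt_zero, zero_div]
    have hset : {g : ℝ | |g| ≤ 0} = {(0:ℝ)} := by
      ext g; simp [abs_nonpos_iff]
    rw [hset]
    have : gaussianReal 0 1 {(0:ℝ)} = 0 :=
      gaussianReal_absolutelyContinuous 0 one_ne_zero (measure_singleton _)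
    rw [this, ENNReal.toReal_zero]
  · -- main case
    push_neg at h0
    obtain ⟨i₀, hi₀⟩ := h0
    set T : ℝ := ∑ i, (τ i)^2 with hTdef
    have hT : 0 < T :=
      Finset.sum_pos' (fun i _ => sq_nonneg _) ⟨i₀, Finset.mem_univ i₀, by positivity⟩
    set t : ℝ := Real.sqrt T with htdef
    have ht : 0 < t := Real.sqrt_pos.mpr hT
    have ht2 : t^2 = T := Real.sq_sqrt hT.le
    set V : ℝ≥0 := ∑ i, ‖τ i‖₊ ^ 2 with hVdef
    have hV : (V : ℝ) = T := by
      rw [hVdef, hTdef]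
      push_cast
      exact Finset.sum_congr rfl fun i _ => by rw [Real.norm_eq_abs, sq_abs]
    set m : (Fin r → ℝ) → (Fin r → ℝ) := fun g => fun i => τ i + g i with hmdef
    have hm : Measurable m :=
      measurable_pi_lambda _ fun i => by
        show Measurable fun c : Fin r → ℝ => τ i + c i
        exact (measurable_pi_apply (X := fun _ : Fin r => ℝ) i).const_add (τ i)
    set ν : Measure (Fin r → ℝ) := Measure.map m μ with hνdef
    haveI : IsProbabilityMeasure ν := Measure.isProbabilityMeasure_map hm.aemeasurable
    set ρi : Fin r → ℝ → ℝ≥0∞ :=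
      fun i t => ENNReal.ofReal (rexp (τ i * t - (τ i)^2/2)) with hρidef
    have hρimeas : ∀ i, Measurable (ρi i) := by
      intro i; apply ENNReal.measurable_ofReal.comp; fun_prop
    set ρ : (Fin r → ℝ) → ℝ≥0∞ :=
      fun x => ENNReal.ofReal (rexp (∑ i, (τ i * x i - (τ i)^2/2))) with hρdef
    have hρmeas : Measurable ρ := by
      apply ENNReal.measurable_ofReal.comp
      apply Real.continuous_exp.measurable.comp
      exact Finset.measurable_sum _ fun i _ =>
        ((measurable_pi_apply (X := fun _ : Fin r => ℝ) i).const_mul (τ i)).sub measurable_const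
    -- B1: coordinate density identity
    have hB1 : ∀ i, (gaussianReal 0 1).withDensity (ρi i) = gaussianReal (τ i) 1 := by
      intro i
      rw [gaussianReal_of_var_ne_zero 0 one_ne_zero,
        gaussianReal_of_var_ne_zero (τ i) one_ne_zero,
        ← withDensity_mul _ (measurable_gaussianPDF 0 1) (hρimeas i)]
      congr 1
      funext s
      simp only [Pi.mul_apply, gaussianPDF]
      rw [← ENNReal.ofReal_mul (gaussianPDFReal_nonneg _ _ _)]
      congr 1
      simp only [gaussianPDFReal, NNReal.coe_one, mul_one, sub_zero]
      rw [mul_assoc, ← Real.exp_add]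
      congr 1
      ring
    -- B3: factorization of ρ
    have hB3 : ρ = fun x => ∏ i, ρi i (x i) := by
      funext x
      show ENNReal.ofReal (rexp (∑ i, (τ i * x i - (τ i)^2/2))) = _
      rw [Real.exp_sum, ENNReal.ofReal_prod_of_nonneg (fun i _ => (Real.exp_pos _).le)]
    -- B2: ν as a pi measure
    have hB2 : Measure.pi (fun i => gaussianReal (τ i) 1) = ν := by
      refine Measure.pi_eq fun s hs => ?_
      rw [hνdef, Measure.map_apply hm (MeasurableSet.univ_pi hs)]
      have hpre : m ⁻¹' (Set.univ.pi s) = Set.univ.pi (fun i => (τ i + ·) ⁻¹' s i) := by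
        ext g
        simp [hmdef, Set.mem_univ_pi]
      rw [hpre, hμ, Measure.pi_pi]
      refine Finset.prod_congr rfl fun i _ => ?_
      rw [← Measure.map_apply (measurable_const_add (τ i)) (hs i),
        gaussianReal_map_const_add, zero_add]
    -- B: ν = μ.withDensity ρ
    have hB : ν = μ.withDensity ρ := by
      rw [hB3, hμ, pi_withDensity_eq r ρi hρimeas _ hB1, hB2, hνdef]
    haveI : IsProbabilityMeasure (μ.withDensity ρ) := hB ▸ (inferInstance : IsProbabilityMeasure ν)
    have htv : tvDist μ ν = (μ {x | ρ x ≤ 1}).toReal - ((μ.withDensity ρ) {x | ρ x ≤ 1}).toReal := by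
      rw [hB]
      exact tvDist_withDensity μ ρ hρmeas
    rw [htv, ← hB]
    -- C: the set {ρ ≤ 1}
    set L : (Fin r → ℝ) → ℝ := fun x => ∑ i, τ i * x i with hLdef
    have hL : Measurable L := by
      exact Finset.measurable_sum _ fun i _ => (measurable_pi_apply (X := fun _ : Fin r => ℝ) i).const_mul (τ i)
    have hC : {x : Fin r → ℝ | ρ x ≤ 1} = L ⁻¹' (Set.Iic (T/2)) := by
      ext x
      simp only [Set.mem_setOf_eq, Set.mem_preimage, Set.mem_Iic, hρdef]
      rw [ENNReal.ofReal_le_one, Real.exp_le_one_iff]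
      rw [Finset.sum_sub_distrib, ← Finset.sum_div, ← hTdef]
      show ∑ i, τ i * x i - T / 2 ≤ 0 ↔ ∑ i, τ i * x i ≤ T / 2
      constructor <;> intro h <;> linarith
    -- D: measure of halfspace under μ
    have hD : ∀ c : ℝ, μ (L ⁻¹' (Set.Iic c)) = gaussianReal 0 V (Set.Iic c) := by
      intro c
      rw [← Measure.map_apply hL measurableSet_Iic, hμ, hLdef, map_sum_pi_gaussian r τ, hVdef]
    -- E: measure under ν
    have hE : ν (L ⁻¹' (Set.Iic (T/2))) = gaussianReal 0 V (Set.Iic (-(T/2))) := by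
      rw [hνdef, Measure.map_apply hm (hL measurableSet_Iic)]
      have hpre : m ⁻¹' (L ⁻¹' (Set.Iic (T/2))) = L ⁻¹' (Set.Iic (-(T/2))) := by
        ext g
        simp only [Set.mem_preimage, Set.mem_Iic, hLdef, hmdef]
        have hsum : ∑ i, τ i * (τ i + g i) = T + ∑ i, τ i * g i := by
          rw [hTdef, ← Finset.sum_add_distrib]
          exact Finset.sum_congr rfl fun i _ => by ring
        show ∑ i, τ i * (τ i + g i) ≤ T / 2 ↔ ∑ i, τ i * g i ≤ -(T/2)
        rw [hsum]
        constructor <;> intro h <;> linarith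
      rw [hpre, hD]
    -- F: identify the gaussian halfspace measures
    have hmapt : Measure.map (t * ·) (gaussianReal 0 1) = gaussianReal 0 V := by
      rw [gaussianReal_map_const_mul t, mul_zero]
      congr 1
      ext
      push_cast
      rw [mul_one, ht2, hV]
    have hF : ∀ c : ℝ, gaussianReal 0 V (Set.Iic c) = gaussianReal 0 1 (Set.Iic (c/t)) := by
      intro c
      rw [← hmapt, Measure.map_apply (measurable_const_mul t) measurableSet_Iic]
      congr 1
      ext x
      simp only [Set.mem_preimage, Set.mem_Iic]
      rw [← le_div_iff₀' ht]
    have hc1 : T/2/t = t/2 := by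
      rw [← ht2]; field_simp
    have hc2 : -(T/2)/t = -(t/2) := by
      rw [← ht2]; field_simp
    rw [hC, hD, hE, hF, hF, hc1, hc2]
    -- final arithmetic
    have hle2 : -(t/2) ≤ t/2 := by linarith
    have hsplit : gaussianReal 0 1 (Set.Iic (-(t/2))) + gaussianReal 0 1 (Set.Ioc (-(t/2)) (t/2))
        = gaussianReal 0 1 (Set.Iic (t/2)) := by
      rw [← measure_union (Set.Iic_disjoint_Ioc le_rfl) measurableSet_Ioc,
        Set.Iic_union_Ioc_eq_Iic hle2]
    have hIoc : gaussianReal 0 1 (Set.Ioc (-(t/2)) (t/2))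
        = gaussianReal 0 1 {g : ℝ | |g| ≤ t / 2} := by
      have hset : {g : ℝ | |g| ≤ t / 2} = Set.Icc (-(t/2)) (t/2) := by
        ext g
        simp only [Set.mem_setOf_eq, Set.mem_Icc, abs_le]
      rw [hset, ← Set.Ioc_insert_left hle2, Set.insert_eq]
      have hz : gaussianReal 0 1 {(-(t/2) : ℝ)} = 0 :=
        gaussianReal_absolutelyContinuous 0 one_ne_zero (measure_singleton _)
      refine le_antisymm (measure_mono (Set.subset_union_right)) ?_
      calc gaussianReal 0 1 ({(-(t/2):ℝ)} ∪ Set.Ioc (-(t/2)) (t/2))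
          ≤ gaussianReal 0 1 {(-(t/2):ℝ)} + gaussianReal 0 1 (Set.Ioc (-(t/2)) (t/2)) :=
            measure_union_le _ _
        _ = gaussianReal 0 1 (Set.Ioc (-(t/2)) (t/2)) := by rw [hz, zero_add]
    rw [← hIoc, ← hsplit, ENNReal.toReal_add (measure_ne_top _ _) (measure_ne_top _ _)]
    ring
end

section
/- Let S be a real r × n matrix with orthonormal rows (S·Sᵀ = I_r). Then there exists an index i ∈ {1,…,n} such that both ‖SᵀS·e_i‖₂² ≤ 2r/n and ‖SᵀS·e_i‖₁ ≤ 2√r, where e_i is the i-th standard basis vector of ℝ^n. -/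
open Finset

/-- For any matrix `S` with orthonormal rows, there is an index `i` such that the column
`SᵀS·e_i` has small ℓ₂ and ℓ₁ norms: `‖SᵀS·e_i‖₂² ≤ 2r/n` and `‖SᵀS·e_i‖₁ ≤ 2√r`. -/
theorem exists_small_column (r n : ℕ) (hr : 0 < r) (hn : 0 < n)
    (S : Matrix (Fin r) (Fin n) ℝ) (hS : S * S.transpose = 1) :
    ∃ i : Fin n,
      (∑ j, ((S.transpose * S) j i)^2 ≤ 2 * (r : ℝ) / n) ∧
      (∑ j, |(S.transpose * S) j i| ≤ 2 * Real.sqrt r) := by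
  set P := S.transpose * S with hP
  set f : Fin n → ℝ := fun i => ∑ j, (P j i)^2 with hf
  set g : Fin n → ℝ := fun i => ∑ j, |P j i| with hg
  have hrpos : (0:ℝ) < r := by exact_mod_cast hr
  have hnpos : (0:ℝ) < n := by exact_mod_cast hn
  have hsq : Real.sqrt r > 0 := Real.sqrt_pos.mpr hrpos
  -- P is idempotent and symmetric
  have hPsymm : P.transpose = P := by
    rw [hP, Matrix.transpose_mul, Matrix.transpose_transpose]
  have hPP : P * P = P := by
    rw [hP, Matrix.mul_assoc, ← Matrix.mul_assoc S, hS, Matrix.one_mul]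
  -- total ℓ2 mass
  have hsum2 : ∑ i, f i = r := by
    have h1 : ∑ i, f i = Matrix.trace (P.transpose * P) := by
      rw [Matrix.trace]
      simp only [Matrix.diag, Matrix.mul_apply, Matrix.transpose_apply, hf, sq]
    rw [h1, hPsymm, hPP, hP, Matrix.trace_mul_comm, hS, Matrix.trace_one]
    simp
  have hfnonneg : ∀ i, 0 ≤ f i := fun i => Finset.sum_nonneg fun j _ => sq_nonneg _
  -- per-column Cauchy-Schwarz: g i ^ 2 ≤ n * f i
  have hcs : ∀ i, g i ^ 2 ≤ n * f i := by
    intro i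
    have := sq_sum_le_card_mul_sum_sq (s := (univ : Finset (Fin n)))
      (f := fun j => |P j i|)
    simpa [hf, hg, sq_abs] using this
  have hgnonneg : ∀ i, 0 ≤ g i := fun i => Finset.sum_nonneg fun j _ => abs_nonneg _
  have hgle : ∀ i, g i ≤ Real.sqrt n * Real.sqrt (f i) := by
    intro i
    have h := hcs i
    have : g i ≤ Real.sqrt (n * f i) := by
      rw [← Real.sqrt_sq (hgnonneg i)]
      exact Real.sqrt_le_sqrt h
    rwa [Real.sqrt_mul (le_of_lt hnpos)] at this
  -- total ℓ1 mass
  have hsum1 : ∑ i, g i ≤ n * Real.sqrt r := by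
    have h1 : ∑ i, g i ≤ Real.sqrt n * ∑ i, Real.sqrt (f i) := by
      rw [Finset.mul_sum]
      exact Finset.sum_le_sum fun i _ => hgle i
    have h2 : (∑ i, Real.sqrt (f i)) ^ 2 ≤ n * r := by
      have := sq_sum_le_card_mul_sum_sq (s := (univ : Finset (Fin n)))
        (f := fun i => Real.sqrt (f i))
      simp only [Real.sq_sqrt (hfnonneg _)] at this
      calc (∑ i, Real.sqrt (f i)) ^ 2 ≤ (#univ : ℝ) * ∑ i, f i := this
        _ = n * r := by rw [hsum2]; simp
    have h3 : ∑ i, Real.sqrt (f i) ≤ Real.sqrt (n * r) := by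
      rw [← Real.sqrt_sq (Finset.sum_nonneg fun i _ => Real.sqrt_nonneg _)]
      exact Real.sqrt_le_sqrt h2
    calc ∑ i, g i ≤ Real.sqrt n * Real.sqrt (n * r) := by
          refine le_trans h1 (mul_le_mul_of_nonneg_left h3 (Real.sqrt_nonneg _))
      _ = n * Real.sqrt r := by
          rw [Real.sqrt_mul (le_of_lt hnpos), ← mul_assoc,
            Real.mul_self_sqrt (le_of_lt hnpos)]
  -- averaging
  by_contra hcon
  push_neg at hcon
  set A : Finset (Fin n) := univ.filter (fun i => 2 * (r:ℝ) / n < f i) with hA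
  set B : Finset (Fin n) := univ.filter (fun i => ¬ (2 * (r:ℝ) / n < f i)) with hB
  have hcard : (A.card : ℝ) + B.card = n := by
    rw [hA, hB]
    have h := Finset.card_filter_add_card_filter_not
      (s := (univ : Finset (Fin n))) (p := fun i => 2 * (r:ℝ) / n < f i)
    have h' : A.card + B.card = n := by
      simpa only [Finset.card_univ, Fintype.card_fin] using h
    rw [← Nat.cast_add, h']
  -- B bound
  have hBsum : (B.card : ℝ) * (2 * Real.sqrt r) ≤ n * Real.sqrt r := by
    have h1 : ∀ i ∈ B, 2 * Real.sqrt r < g i := by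
      intro i hi
      rw [hB, Finset.mem_filter] at hi
      exact hcon i (not_lt.mp hi.2)
    have h2 : (B.card : ℝ) * (2 * Real.sqrt r) ≤ ∑ i ∈ B, g i := by
      calc (B.card : ℝ) * (2 * Real.sqrt r) = ∑ _i ∈ B, 2 * Real.sqrt r := by
            rw [Finset.sum_const, nsmul_eq_mul]
        _ ≤ ∑ i ∈ B, g i := Finset.sum_le_sum fun i hi => le_of_lt (h1 i hi)
    calc (B.card : ℝ) * (2 * Real.sqrt r) ≤ ∑ i ∈ B, g i := h2
      _ ≤ ∑ i, g i := Finset.sum_le_sum_of_subset_of_nonneg (Finset.subset_univ _)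
          (fun i _ _ => hgnonneg i)
      _ ≤ n * Real.sqrt r := hsum1
  have hBle : (B.card : ℝ) * 2 ≤ n := by
    nlinarith [hsq]
  -- A case analysis
  rcases Finset.eq_empty_or_nonempty A with hAe | hAne
  · have : (B.card : ℝ) = n := by rw [hAe] at hcard; simpa using hcard
    rw [this] at hBle
    nlinarith
  · have hAsum : (A.card : ℝ) * (2 * (r:ℝ) / n) < ∑ i ∈ A, f i := by
      have : ∑ _i ∈ A, 2 * (r:ℝ) / n < ∑ i ∈ A, f i := by
        refine Finset.sum_lt_sum_of_nonempty hAne ?_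
        intro i hi
        rw [hA, Finset.mem_filter] at hi
        exact hi.2
      calc (A.card : ℝ) * (2 * (r:ℝ) / n) = ∑ _i ∈ A, 2 * (r:ℝ) / n := by
            rw [Finset.sum_const, nsmul_eq_mul]
        _ < ∑ i ∈ A, f i := this
    have hAr : (A.card : ℝ) * (2 * (r:ℝ) / n) < r := by
      calc (A.card : ℝ) * (2 * (r:ℝ) / n) < ∑ i ∈ A, f i := hAsum
        _ ≤ ∑ i, f i := Finset.sum_le_sum_of_subset_of_nonneg (Finset.subset_univ _)
            (fun i _ _ => hfnonneg i)
        _ = r := hsum2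
    have hAle : (A.card : ℝ) * 2 < n := by
      have h := hAr
      rw [div_eq_mul_inv] at h
      nlinarith [mul_pos hrpos (inv_pos.mpr hnpos), inv_pos.mpr hnpos,
        mul_inv_cancel₀ (ne_of_gt hnpos)]
    nlinarith
end

section
/- Let S be a real r × n matrix with orthonormal rows (S·Sᵀ = I_r). Then at least 9n/10 of the indices i ∈ {1,…,n} satisfy both ‖SᵀS·e_i‖₂² ≤ 20r/n and ‖SᵀS·e_i‖₁ ≤ 20√r, where e_i is the i-th standard basis vector of ℝ^n. -/
open Finset

/-- For any matrix `S` with orthonormal rows, at least `9n/10` of the indices `i`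
satisfy both `‖SᵀS·e_i‖₂² ≤ 20r/n` and `‖SᵀS·e_i‖₁ ≤ 20√r`. -/
theorem many_small_columns (r n : ℕ) (hr : 0 < r) (hn : 0 < n)
    (S : Matrix (Fin r) (Fin n) ℝ) (hS : S * S.transpose = 1) :
    9 * (n : ℝ) / 10 ≤
      ({i : Fin n |
        (∑ j, ((S.transpose * S) j i)^2 ≤ 20 * (r : ℝ) / n) ∧
        (∑ j, |(S.transpose * S) j i| ≤ 20 * Real.sqrt r)}).ncard := by
  set P := S.transpose * S with hP
  have hPP : P * P = P := by
    rw [hP, Matrix.mul_assoc, ← Matrix.mul_assoc S, hS, Matrix.one_mul]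
  have hsym : ∀ i j, P i j = P j i := by
    intro i j
    simp [hP, Matrix.mul_apply, mul_comm]
  have hcol : ∀ i, ∑ j, (P j i)^2 = P i i := by
    intro i
    have : (P * P) i i = P i i := by rw [hPP]
    rw [Matrix.mul_apply] at this
    rw [← this]
    apply Finset.sum_congr rfl
    intro j _
    rw [hsym i j, sq]
  have hdiag_nonneg : ∀ i, 0 ≤ P i i := by
    intro i
    rw [← hcol i]
    exact Finset.sum_nonneg fun j _ => sq_nonneg _
  have htr : ∑ i, P i i = (r : ℝ) := by
    have h1 : Matrix.trace P = Matrix.trace (S * S.transpose) := Matrix.trace_mul_comm _ _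
    rw [hS, Matrix.trace_one] at h1
    simpa [Matrix.trace, Matrix.diag] using h1
  -- the good finset
  set G := Finset.univ.filter (fun i : Fin n => P i i ≤ 20 * (r : ℝ) / n) with hG
  have hnpos : (0:ℝ) < n := by exact_mod_cast hn
  have hrpos : (0:ℝ) < r := by exact_mod_cast hr
  -- Markov: bad set small
  have hbad : ((Finset.univ.filter (fun i : Fin n => ¬ P i i ≤ 20 * (r : ℝ) / n)).card : ℝ)
      ≤ n / 20 := by
    set B := Finset.univ.filter (fun i : Fin n => ¬ P i i ≤ 20 * (r : ℝ) / n) with hB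
    have h1 : (B.card : ℝ) * (20 * (r : ℝ) / n) ≤ ∑ i ∈ B, P i i := by
      rw [Finset.card_eq_sum_ones, Nat.cast_sum]
      rw [Finset.sum_mul]
      apply Finset.sum_le_sum
      intro i hi
      have := (Finset.mem_filter.mp hi).2
      push_neg at this
      simpa using this.le
    have h2 : ∑ i ∈ B, P i i ≤ ∑ i, P i i :=
      Finset.sum_le_sum_of_subset_of_nonneg (Finset.subset_univ _)
        (fun i _ _ => hdiag_nonneg i)
    rw [htr] at h2
    have h3 : (B.card : ℝ) * (20 * (r : ℝ) / n) ≤ r := h1.trans h2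
    have hne : (n:ℝ) ≠ 0 := ne_of_gt hnpos
    have h4 : (B.card:ℝ) * (20 * r) ≤ r * n := by
      have h5 := mul_le_mul_of_nonneg_right h3 hnpos.le
      calc (B.card:ℝ)*(20*r) = (B.card:ℝ)*(20*(r:ℝ)/n)*n := by field_simp
        _ ≤ r * n := h5
    rw [le_div_iff₀ (by norm_num : (0:ℝ) < 20)]
    nlinarith [h4, hrpos]
  have hGcard : 9 * (n : ℝ) / 10 ≤ G.card := by
    have := Finset.card_filter_add_card_filter_not
      (s := (Finset.univ : Finset (Fin n))) (p := fun i : Fin n => P i i ≤ 20 * (r : ℝ) / n)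
    have hcast : (G.card : ℝ) +
        ((Finset.univ.filter (fun i : Fin n => ¬ P i i ≤ 20 * (r : ℝ) / n)).card : ℝ) = n := by
      rw [hG]
      exact_mod_cast this.trans (by simp)
    linarith [hbad]
  -- good indices satisfy both conditions
  have hGsub : (↑G : Set (Fin n)) ⊆
      {i : Fin n | (∑ j, (P j i)^2 ≤ 20 * (r : ℝ) / n) ∧
        (∑ j, |P j i| ≤ 20 * Real.sqrt r)} := by
    intro i hi
    have hii : P i i ≤ 20 * (r : ℝ) / n := (Finset.mem_filter.mp hi).2
    have hc1 : ∑ j, (P j i)^2 ≤ 20 * (r : ℝ) / n := by rw [hcol i]; exact hii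
    refine ⟨hc1, ?_⟩
    have hcs : (∑ j, |P j i|)^2 ≤ (n : ℝ) * ∑ j, (P j i)^2 := by
      have := Finset.sum_mul_sq_le_sq_mul_sq Finset.univ (fun j : Fin n => |P j i|) (fun _ => 1)
      simpa [sq_abs, mul_comm] using this
    have hsq : (∑ j, |P j i|)^2 ≤ 20 * (r : ℝ) := by
      calc (∑ j, |P j i|)^2 ≤ (n : ℝ) * ∑ j, (P j i)^2 := hcs
        _ ≤ (n : ℝ) * (20 * (r : ℝ) / n) := by
            exact mul_le_mul_of_nonneg_left hc1 (le_of_lt hnpos)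
        _ = 20 * (r : ℝ) := by field_simp
    have hL0 : 0 ≤ ∑ j, |P j i| := Finset.sum_nonneg fun j _ => abs_nonneg _
    have hs0 : 0 ≤ Real.sqrt r := Real.sqrt_nonneg _
    have hs2 : Real.sqrt r ^ 2 = r := Real.sq_sqrt hrpos.le
    have hr1 : (1:ℝ) ≤ r := by exact_mod_cast hr
    nlinarith [hsq, hL0, hs0, hs2, hr1, sq_nonneg (∑ j, |P j i| - 20 * Real.sqrt r)]
  calc 9 * (n : ℝ) / 10 ≤ G.card := hGcard
    _ = ((↑G : Set (Fin n)).ncard : ℝ) := by rw [Set.ncard_coe_finset]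
    _ ≤ _ := by
        exact_mod_cast Nat.cast_le.mpr (Set.ncard_le_ncard hGsub (Set.toFinite _))
end

section
/- Let S be a real r × n matrix with orthonormal rows (S·Sᵀ = I_r) and suppose r ≤ n/4. Then there exist an index i ∈ {1,…,n} and a vector v ∈ ℝ^n such that S·v = 0, v_i ≥ 1/2, and ‖v‖₁ ≤ 2√r + 1. -/
open Finset

/-- Cauchy–Schwarz: `∑ |f j| ≤ √card * √(∑ f j ^ 2)`. -/
lemma sum_abs_le_sqrt_card_mul_sqrt {ι : Type*} [Fintype ι] (f : ι → ℝ) :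
    ∑ j, |f j| ≤ Real.sqrt (Fintype.card ι) * Real.sqrt (∑ j, f j ^ 2) := by
  have h : (∑ j, |f j|) ^ 2 ≤ (Fintype.card ι : ℝ) * ∑ j, f j ^ 2 := by
    simpa [sq_abs, Finset.card_univ] using
      sq_sum_le_card_mul_sum_sq (s := (univ : Finset ι)) (f := fun j => |f j|)
  calc ∑ j, |f j| = Real.sqrt ((∑ j, |f j|) ^ 2) :=
        (Real.sqrt_sq (by positivity)).symm
    _ ≤ Real.sqrt ((Fintype.card ι : ℝ) * ∑ j, f j ^ 2) := Real.sqrt_le_sqrt h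
    _ = _ := Real.sqrt_mul (by positivity) _

/-- For any matrix `S` with orthonormal rows and `r ≤ n/4`, there exist an index `i` and
a vector `v` in the kernel of `S` with `v_i ≥ 1/2` and `‖v‖₁ ≤ 2√r + 1`. -/
theorem exists_kernel_vector_with_large_coordinate (r n : ℕ) (hr : 0 < r) (hn : 0 < n)
    (hrn : (r : ℝ) ≤ (n : ℝ) / 4)
    (S : Matrix (Fin r) (Fin n) ℝ) (hS : S * S.transpose = 1) :
    ∃ (i : Fin n) (v : Fin n → ℝ),
      S.mulVec v = 0 ∧ (1:ℝ)/2 ≤ v i ∧ ∑ j, |v j| ≤ 2 * Real.sqrt r + 1 := by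
  classical
  set P := S.transpose * S with hPdef
  have hPentry : ∀ i j, P i j = ∑ k, S k i * S k j := by
    intro i j
    simp [hPdef, Matrix.mul_apply, Matrix.transpose_apply]
  have hPsymm : ∀ i j, P i j = P j i := by
    intro i j
    simp only [hPentry]
    exact Finset.sum_congr rfl fun k _ => mul_comm _ _
  have hSP : S * P = S := by
    rw [hPdef, ← Matrix.mul_assoc, hS, Matrix.one_mul]
  have hPP : P * P = P := by
    rw [hPdef, Matrix.mul_assoc, ← Matrix.mul_assoc S, hS, Matrix.one_mul]
  have hdiag_nonneg : ∀ i, 0 ≤ P i i := by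
    intro i
    rw [hPentry]
    exact Finset.sum_nonneg fun k _ => mul_self_nonneg _
  have htrace : ∑ i, P i i = (r : ℝ) := by
    have h1 : Matrix.trace P = Matrix.trace (S * S.transpose) :=
      (Matrix.trace_mul_comm S.transpose S)
    rw [hS, Matrix.trace_one] at h1
    simpa [Matrix.trace, Matrix.diag] using h1
  -- Frobenius norm of P squared equals r
  set q : Fin n → ℝ := fun i => ∑ j, (P i j) ^ 2 with hq
  have hq_nonneg : ∀ i, 0 ≤ q i := fun i => Finset.sum_nonneg fun j _ => sq_nonneg _
  have hqdiag : ∀ i, q i = P i i := by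
    intro i
    have : (P * P) i i = ∑ j, P i j * P j i := Matrix.mul_apply
    rw [hPP] at this
    show (∑ j, P i j ^ 2) = P i i
    rw [this]
    exact Finset.sum_congr rfl fun j _ => by rw [sq, ← hPsymm i j]
  have hqsum : ∑ i, q i = (r : ℝ) := by
    rw [Finset.sum_congr rfl fun i _ => hqdiag i, htrace]
  -- row ℓ¹ norms
  set t : Fin n → ℝ := fun i => ∑ j, |P i j| with ht
  have ht_nonneg : ∀ i, 0 ≤ t i := fun i => Finset.sum_nonneg fun j _ => abs_nonneg _
  have htle : ∀ i, t i ≤ Real.sqrt n * Real.sqrt (q i) := by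
    intro i
    simpa [Fintype.card_fin] using sum_abs_le_sqrt_card_mul_sqrt (fun j => P i j)
  have htsum : ∑ i, t i ≤ (n : ℝ) * Real.sqrt r := by
    have h1 : ∑ i, t i ≤ Real.sqrt n * ∑ i, Real.sqrt (q i) := by
      rw [Finset.mul_sum]
      exact Finset.sum_le_sum fun i _ => htle i
    have h2 : ∑ i, Real.sqrt (q i) ≤ Real.sqrt n * Real.sqrt r := by
      have h3 : ∑ i, |Real.sqrt (q i)| ≤
          Real.sqrt (Fintype.card (Fin n)) * Real.sqrt (∑ i, (Real.sqrt (q i)) ^ 2) :=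
        sum_abs_le_sqrt_card_mul_sqrt _
      have h4 : ∀ i, (Real.sqrt (q i)) ^ 2 = q i := fun i => Real.sq_sqrt (hq_nonneg i)
      simp only [abs_of_nonneg (Real.sqrt_nonneg _), Fintype.card_fin] at h3
      calc ∑ i, Real.sqrt (q i) ≤ Real.sqrt n * Real.sqrt (∑ i, (Real.sqrt (q i)) ^ 2) := h3
        _ = Real.sqrt n * Real.sqrt r := by
            rw [Finset.sum_congr rfl fun i _ => h4 i, hqsum]
    calc ∑ i, t i ≤ Real.sqrt n * (Real.sqrt n * Real.sqrt r) := by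
          refine h1.trans ?_
          exact mul_le_mul_of_nonneg_left h2 (Real.sqrt_nonneg _)
      _ = (n : ℝ) * Real.sqrt r := by
          rw [← mul_assoc, Real.mul_self_sqrt (by positivity)]
  have hsqrt_r_pos : (0:ℝ) < Real.sqrt r := Real.sqrt_pos.mpr (by exact_mod_cast hr)
  -- averaging: find a good index i
  have hsum : ∑ i, (2 * P i i + t i / (2 * Real.sqrt r)) ≤ ∑ _i : Fin n, (1:ℝ) := by
    rw [Finset.sum_add_distrib, ← Finset.mul_sum, htrace]
    have h5 : ∑ i, t i / (2 * Real.sqrt r) = (∑ i, t i) / (2 * Real.sqrt r) := by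
      rw [Finset.sum_div]
    rw [h5]
    have h6 : (∑ i, t i) / (2 * Real.sqrt r) ≤ (n : ℝ) / 2 := by
      rw [div_le_iff₀ (by positivity)]
      calc ∑ i, t i ≤ (n : ℝ) * Real.sqrt r := htsum
        _ = (n : ℝ) / 2 * (2 * Real.sqrt r) := by ring
    have h7 : 2 * (r : ℝ) ≤ (n : ℝ) / 2 := by linarith
    simp only [Finset.sum_const, Finset.card_univ, Fintype.card_fin, nsmul_eq_mul, mul_one]
    linarith
  obtain ⟨i, -, hi⟩ := Finset.exists_le_of_sum_le ⟨(⟨0, hn⟩ : Fin n), Finset.mem_univ _⟩ hsum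
  have hPii : P i i ≤ 1/2 := by
    have := ht_nonneg i
    have h8 : 0 ≤ t i / (2 * Real.sqrt r) := by positivity
    linarith
  have hti : t i ≤ 2 * Real.sqrt r := by
    have h9 := hdiag_nonneg i
    have h10 : t i / (2 * Real.sqrt r) ≤ 1 := by linarith
    calc t i = t i / (2 * Real.sqrt r) * (2 * Real.sqrt r) := by
          field_simp
      _ ≤ 1 * (2 * Real.sqrt r) := by
          exact mul_le_mul_of_nonneg_right h10 (by positivity)
      _ = 2 * Real.sqrt r := one_mul _
  -- the kernel vector
  refine ⟨i, (1 - P).mulVec (Pi.single i 1), ?_, ?_, ?_⟩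
  · rw [Matrix.mulVec_mulVec]
    have : S * (1 - P) = 0 := by
      rw [Matrix.mul_sub, Matrix.mul_one, hSP, sub_self]
    rw [this, Matrix.zero_mulVec]
  · have hv : (1 - P).mulVec (Pi.single i 1) i = 1 - P i i := by
      rw [Matrix.mulVec_single]
      simp [Matrix.one_apply]
    rw [hv]
    linarith
  · have hv : ∀ j, (1 - P).mulVec (Pi.single i 1) j
        = (if j = i then (1:ℝ) else 0) - P j i := by
      intro j
      rw [Matrix.mulVec_single]
      simp [Matrix.sub_apply, Matrix.one_apply]
    have hsplit : ∑ j, |(1 - P).mulVec (Pi.single i 1) j|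
        = |1 - P i i| + ∑ j ∈ Finset.univ.erase i, |(1 - P).mulVec (Pi.single i 1) j| := by
      rw [← Finset.add_sum_erase _ _ (Finset.mem_univ i)]
      congr 1
      rw [hv i]
      simp
    rw [hsplit]
    have h11 : |1 - P i i| ≤ 1 := by
      rw [abs_of_nonneg (by linarith)]
      linarith [hdiag_nonneg i]
    have h12 : ∑ j ∈ Finset.univ.erase i, |(1 - P).mulVec (Pi.single i 1) j|
        ≤ 2 * Real.sqrt r := by
      have h13 : ∑ j ∈ Finset.univ.erase i, |(1 - P).mulVec (Pi.single i 1) j|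
          = ∑ j ∈ Finset.univ.erase i, |P j i| := by
        refine Finset.sum_congr rfl fun j hj => ?_
        rw [hv j, if_neg (Finset.ne_of_mem_erase hj), zero_sub, abs_neg]
      rw [h13]
      calc ∑ j ∈ Finset.univ.erase i, |P j i| ≤ ∑ j, |P j i| := by
            exact Finset.sum_le_sum_of_subset_of_nonneg (Finset.erase_subset _ _)
              (fun j _ _ => abs_nonneg _)
        _ = t i := by
            rw [ht]
            exact Finset.sum_congr rfl fun j _ => by rw [hPsymm j i]
        _ ≤ 2 * Real.sqrt r := hti
    linarith
end

section
/- Let ε ∈ (0,1], let n, B, R be positive integers, and let x ∈ ℝ^n be a nonzero vector with nonnegative coordinates. Let S = {i : x_i ≥ ε·‖x‖₁} be the set of ε-heavy hitters (so |S| ≤ ⌈1/ε⌉). Let h_1,…,h_R : {1,…,n} → {1,…,B} be arbitrary functions; define counters C_{r,j} = Σ_{i : h_r(i)=j} x_i for r ∈ [R], j ∈ [B], and estimates x̂_i = min_{1≤r≤R} C_{r,h_r(i)}. Suppose that for every set T ⊆ {1,…,n} \ S with |T| = ⌈30/ε⌉ there exists r ∈ [R] such that the image h_r(T) has at least ⌈10/ε⌉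 elements. Then for every set L ⊆ {1,…,n} with |L| ≥ ⌈30/ε⌉ + ⌈1/ε⌉ such that x̂_i ≥ x̂_j for all i ∈ L and j ∉ L, it holds that S ⊆ L. -/
open Finset

/-- Deterministic core of the improved Count-Min analysis under Guarantee 3: if the hash
functions disperse every candidate set of `⌈30/ε⌉` non-heavy coordinates into at least
`⌈10/ε⌉` buckets in some row, then any set of `⌈30/ε⌉ + ⌈1/ε⌉` coordinates with the
largest Count-Min estimates contains all `ε`-heavy hitters of the nonnegative input. -/
theorem count_min_guarantee3_core (ε : ℝ) (hε0 : 0 < ε) (hε1 : ε ≤ 1)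
    (n B R : ℕ) (hn : 0 < n) (hB : 0 < B) (hR : 0 < R)
    (x : Fin n → ℝ) (hx : x ≠ 0) (hxpos : ∀ i, 0 ≤ x i)
    (h : Fin R → Fin n → Fin B)
    (hdisperse : ∀ T : Finset (Fin n),
      (∀ i ∈ T, x i < ε * ∑ j, |x j|) → T.card = ⌈30/ε⌉₊ →
      ∃ r : Fin R, ⌈10/ε⌉₊ ≤ (T.image (h r)).card) :
    ∀ L : Finset (Fin n), ⌈30/ε⌉₊ + ⌈1/ε⌉₊ ≤ L.card →
      (∀ i ∈ L, ∀ j ∉ L,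
        (⨅ r : Fin R, ∑ j' ∈ Finset.univ.filter (fun j' => h r j' = h r j), x j') ≤
        (⨅ r : Fin R, ∑ i' ∈ Finset.univ.filter (fun i' => h r i' = h r i), x i')) →
      ∀ i : Fin n, ε * (∑ j, |x j|) ≤ x i → i ∈ L := by
  intro L hLcard hL2 i hi
  by_contra hiL
  haveI : Nonempty (Fin R) := ⟨⟨0, hR⟩⟩
  set N : ℝ := ∑ j, |x j| with hN
  have hNx : N = ∑ j, x j := by
    simp only [hN]
    exact Finset.sum_congr rfl (fun j _ => abs_of_nonneg (hxpos j))
  have hNpos : 0 < N := by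
    rw [hNx]
    have hex : ∃ j, 0 < x j := by
      by_contra hc
      push_neg at hc
      exact hx (funext fun j => le_antisymm (hc j) (hxpos j))
    obtain ⟨j, hj⟩ := hex
    exact Finset.sum_pos' (fun k _ => hxpos k) ⟨j, Finset.mem_univ j, hj⟩
  set est : Fin n → ℝ := fun k =>
    ⨅ r : Fin R, ∑ i' ∈ Finset.univ.filter (fun i' => h r i' = h r k), x i' with hest
  have hest_le : ∀ k (r : Fin R),
      est k ≤ ∑ i' ∈ Finset.univ.filter (fun i' => h r i' = h r k), x i' :=
    fun k r => ciInf_le (Set.Finite.bddBelow (Set.finite_range _)) r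
  have hle_est : ∀ k, x k ≤ est k := by
    intro k
    refine le_ciInf fun r => ?_
    refine Finset.single_le_sum (fun j _ => hxpos j) ?_
    simp
  set S : Finset (Fin n) := Finset.univ.filter (fun k => ε * N ≤ x k) with hS
  have hScard : S.card ≤ ⌈1/ε⌉₊ := by
    have h1 : (S.card : ℝ) * (ε * N) ≤ ∑ k ∈ S, x k := by
      calc (S.card : ℝ) * (ε * N) = ∑ _k ∈ S, ε * N := by
            rw [Finset.sum_const, nsmul_eq_mul]
        _ ≤ ∑ k ∈ S, x k := Finset.sum_le_sum (fun k hk => (Finset.mem_filter.mp hk).2)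
    have h2 : ∑ k ∈ S, x k ≤ N := by
      rw [hNx]
      exact Finset.sum_le_sum_of_subset_of_nonneg (Finset.subset_univ S)
        (fun k _ _ => hxpos k)
    have h3 : (S.card : ℝ) ≤ 1/ε := by
      rw [le_div_iff₀ hε0]
      nlinarith
    have h4 := h3.trans (Nat.le_ceil (1/ε))
    exact_mod_cast h4
  have hLS : ⌈30/ε⌉₊ ≤ (L \ S).card := by
    have := Finset.card_le_card_sdiff_add_card (s := L) (t := S)
    omega
  obtain ⟨T, hTsub, hTcard⟩ := Finset.exists_subset_card_eq hLS
  have hTL : ∀ j ∈ T, j ∈ L := fun j hj => (Finset.mem_sdiff.mp (hTsub hj)).1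
  have hTnS : ∀ j ∈ T, x j < ε * N := by
    intro j hj
    have := (Finset.mem_sdiff.mp (hTsub hj)).2
    simp only [hS, Finset.mem_filter, Finset.mem_univ, true_and] at this
    linarith [lt_of_not_ge this]
  obtain ⟨r, hr⟩ := hdisperse T hTnS hTcard
  -- every bucket in the image has counter at least ε * N
  have hbucket : ∀ b ∈ T.image (h r),
      ε * N ≤ ∑ j' ∈ Finset.univ.filter (fun j' => h r j' = b), x j' := by
    intro b hb
    obtain ⟨j, hjT, hjb⟩ := Finset.mem_image.mp hb
    have h1 : est i ≤ est j := hL2 j (hTL j hjT) i hiL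
    have h2 : est j ≤ ∑ j' ∈ Finset.univ.filter (fun j' => h r j' = b), x j' := by
      rw [← hjb]; exact hest_le j r
    calc ε * N ≤ x i := hi
      _ ≤ est i := hle_est i
      _ ≤ est j := h1
      _ ≤ _ := h2
  -- sum of bucket counters over distinct buckets is at most N
  have hsum_le : ∑ b ∈ T.image (h r),
      (∑ j' ∈ Finset.univ.filter (fun j' => h r j' = b), x j') ≤ N := by
    have heq : ∑ b ∈ T.image (h r),
        (∑ j' ∈ Finset.univ.filter (fun j' => h r j' = b), x j')
        = ∑ j ∈ Finset.univ.filter (fun j => h r j ∈ T.image (h r)), x j := by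
      rw [← Finset.sum_fiberwise_of_maps_to
        (g := h r) (t := T.image (h r))
        (fun j hj => (Finset.mem_filter.mp hj).2) x]
      refine Finset.sum_congr rfl fun b hb => ?_
      congr 1
      rw [Finset.filter_filter]
      refine Finset.filter_congr fun j _ => ?_
      constructor
      · exact fun hj => ⟨hj ▸ hb, hj⟩
      · exact fun hj => hj.2
    rw [heq, hNx]
    exact Finset.sum_le_sum_of_subset_of_nonneg (Finset.subset_univ _)
      (fun k _ _ => hxpos k)
  have hsum_ge : ((T.image (h r)).card : ℝ) * (ε * N) ≤ ∑ b ∈ T.image (h r),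
      (∑ j' ∈ Finset.univ.filter (fun j' => h r j' = b), x j') := by
    calc ((T.image (h r)).card : ℝ) * (ε * N) = ∑ _b ∈ T.image (h r), ε * N := by
          rw [Finset.sum_const, nsmul_eq_mul]
      _ ≤ _ := Finset.sum_le_sum hbucket
  have hcard10 : (10/ε : ℝ) ≤ ((T.image (h r)).card : ℝ) := by
    refine (Nat.le_ceil (10/ε)).trans ?_
    exact_mod_cast hr
  have h10 : (10/ε) * (ε * N) ≤ N := by
    have hεN : 0 ≤ ε * N := le_of_lt (mul_pos hε0 hNpos)
    nlinarith [mul_le_mul_of_nonneg_right hcard10 hεN]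
  rw [div_mul_eq_mul_div, mul_comm ε N, ← mul_assoc, mul_div_assoc,
    div_self (ne_of_gt hε0), mul_one] at h10
  linarith
end

section
/- Let ζ ∈ (0,1), ε ∈ (0,1), and c > 0 with (1−ζ)·c ≥ 2 + ε. Let Γ : {1,…,N} × {1,…,D} → {1,…,M} satisfy the expansion property: for every A ⊆ {1,…,N} with |A| ≤ ⌈c/ε⌉, the neighborhood Γ(A) = {Γ(i,d) : i ∈ A, d ∈ [D]} has size at least (1−ζ)·|A|·D. Let x ∈ ℝ^N be nonzero with nonnegative coordinates; define counters C_j = Σ_{(i,d) : Γ(i,d)=j} x_i for j ∈ [M] and estimates x̂_i = min_{1≤d≤D} C_{Γ(i,d)}. Then every set L ⊆ {1,…,N} with |L| ≥ ⌈c/ε⌉ + ⌈1/ε⌉ such that x̂_i ≥ x̂_j for all i ∈ L and j ∉ L contains every index i with x_i ≥ ε·‖x‖₁. -/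
open Finset

/-- Correctness of the expander-based heavy hitters scheme in the strict turnstile model:
if `Γ` expands every set of at most `⌈c/ε⌉` left vertices by a `(1−ζ)D` factor and
`(1−ζ)c ≥ 2 + ε`, then any set of `⌈c/ε⌉ + ⌈1/ε⌉` coordinates with the largest
Count-Min-style estimates contains every `ε`-heavy hitter of the nonnegative input. -/
theorem expander_heavy_hitters (ζ ε c : ℝ) (hζ0 : 0 < ζ) (hζ1 : ζ < 1)
    (hε0 : 0 < ε) (hε1 : ε < 1) (hc : 0 < c) (hcζ : 2 + ε ≤ (1 - ζ) * c)
    (N D M : ℕ) (hN : 0 < N) (hD : 0 < D) (hM : 0 < M)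
    (Γ : Fin N × Fin D → Fin M)
    (hexp : ∀ A : Finset (Fin N), A.card ≤ ⌈c/ε⌉₊ →
      (1 - ζ) * A.card * D ≤ (((A ×ˢ (Finset.univ : Finset (Fin D))).image Γ).card : ℝ))
    (x : Fin N → ℝ) (hx : x ≠ 0) (hxpos : ∀ i, 0 ≤ x i) :
    ∀ L : Finset (Fin N), ⌈c/ε⌉₊ + ⌈1/ε⌉₊ ≤ L.card →
      (∀ i ∈ L, ∀ j ∉ L,
        (⨅ d : Fin D, ∑ p ∈ Finset.univ.filter (fun p : Fin N × Fin D => Γ p = Γ (j, d)), x p.1) ≤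
        (⨅ d : Fin D, ∑ p ∈ Finset.univ.filter (fun p : Fin N × Fin D => Γ p = Γ (i, d)), x p.1)) →
      ∀ i : Fin N, ε * (∑ j, |x j|) ≤ x i → i ∈ L := by
  intro L hL hdom i hheavy
  by_contra hiL
  have hTpos : 0 < ∑ j, |x j| := by
    obtain ⟨j, hj⟩ : ∃ j, x j ≠ 0 := by
      by_contra h; push_neg at h; exact hx (funext h)
    have h0 : 0 < |x j| := abs_pos.mpr hj
    calc (0:ℝ) < |x j| := h0
      _ ≤ ∑ j, |x j| := Finset.single_le_sum (fun k _ => abs_nonneg (x k)) (mem_univ j)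
  haveI : Nonempty (Fin D) := ⟨⟨0, hD⟩⟩
  set T : ℝ := ∑ j, |x j| with hTdef
  set C : Fin M → ℝ := fun m =>
    ∑ p ∈ Finset.univ.filter (fun p : Fin N × Fin D => Γ p = m), x p.1 with hCdef
  set est : Fin N → ℝ := fun i' => ⨅ d : Fin D, C (Γ (i', d)) with hestdef
  have hCle : ∀ (i' : Fin N) (d : Fin D), est i' ≤ C (Γ (i', d)) :=
    fun i' d => ciInf_le (Finite.bddBelow_range _) d
  have hxle : ∀ i' : Fin N, x i' ≤ est i' := by
    intro i'
    refine le_ciInf fun d => ?_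
    exact Finset.single_le_sum (f := fun p : Fin N × Fin D => x p.1)
      (a := (i', d)) (fun p _ => hxpos p.1)
      (Finset.mem_filter.mpr ⟨Finset.mem_univ _, rfl⟩)
  have hdom' : ∀ l ∈ L, est i ≤ est l := fun l hl => hdom l hl i hiL
  -- every element of insert i L has large estimate
  have hbig : ∀ j ∈ insert i L, ε * T ≤ est j := by
    intro j hj
    rcases Finset.mem_insert.mp hj with rfl | hjL
    · exact hheavy.trans (hxle j)
    · exact (hheavy.trans ((hxle i).trans (hdom' j hjL)))
  -- pick a subset of size ⌈c/ε⌉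
  have hkle : ⌈c/ε⌉₊ ≤ (insert i L).card := by
    have := Finset.card_le_card (Finset.subset_insert i L)
    omega
  obtain ⟨A, hAsub, hAcard⟩ := Finset.exists_subset_card_eq hkle
  have hexpA := hexp A (le_of_eq hAcard)
  set J := (A ×ˢ (Finset.univ : Finset (Fin D))).image Γ with hJdef
  -- every counter in J is large
  have hJbig : ∀ m ∈ J, ε * T ≤ C m := by
    intro m hm
    obtain ⟨p, hp, rfl⟩ := Finset.mem_image.mp hm
    obtain ⟨hp1, -⟩ := Finset.mem_product.mp hp
    calc ε * T ≤ est p.1 := hbig p.1 (hAsub hp1)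
      _ ≤ C (Γ (p.1, p.2)) := hCle p.1 p.2
      _ = C (Γ p) := by rw [Prod.mk.eta]
  -- total counter mass
  have htotal : ∑ m : Fin M, C m = (D : ℝ) * T := by
    rw [hCdef]
    rw [Finset.sum_fiberwise (Finset.univ : Finset (Fin N × Fin D)) Γ
      (fun p => x p.1)]
    rw [Fintype.sum_prod_type]
    simp only [Finset.sum_const, Finset.card_univ, Fintype.card_fin, nsmul_eq_mul]
    rw [← Finset.mul_sum, hTdef]
    congr 1
    exact Finset.sum_congr rfl fun j _ => (abs_of_nonneg (hxpos j)).symm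
  have hJsum : (J.card : ℝ) * (ε * T) ≤ (D : ℝ) * T := by
    have h1 : (J.card : ℝ) * (ε * T) ≤ ∑ m ∈ J, C m := by
      have := Finset.card_nsmul_le_sum J C (ε * T) hJbig
      simpa [nsmul_eq_mul] using this
    have h2 : ∑ m ∈ J, C m ≤ ∑ m : Fin M, C m := by
      refine Finset.sum_le_sum_of_subset_of_nonneg (Finset.subset_univ J) ?_
      intro m _ _
      exact Finset.sum_nonneg fun p _ => hxpos p.1
    linarith [htotal ▸ h2]
  have hJe : (J.card : ℝ) * ε ≤ (D : ℝ) := by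
    have := (mul_le_mul_iff_of_pos_right hTpos).mp (by linarith [hJsum] : (J.card : ℝ) * ε * T ≤ (D : ℝ) * T)
    exact this
  -- expansion lower bound
  have hkc : c / ε ≤ (⌈c/ε⌉₊ : ℝ) := Nat.le_ceil _
  have hkck : c ≤ ε * (⌈c/ε⌉₊ : ℝ) := by
    rw [div_le_iff₀ hε0] at hkc
    linarith
  have hDpos : (0:ℝ) < (D : ℝ) := by exact_mod_cast hD
  have hA' : (1 - ζ) * (⌈c/ε⌉₊ : ℝ) * D ≤ (J.card : ℝ) := by
    rw [← hAcard]; exact hexpA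
  nlinarith [mul_le_mul_of_nonneg_left hA' hε0.le, mul_le_mul_of_nonneg_left hkck (by linarith : (0:ℝ) ≤ 1 - ζ), hε0.le, hDpos]
end

section
/- Let ε ∈ (0,1), c > 0, and let s, m, n be positive integers. Let M ∈ {0,1}^{m×n} be a (⌈1/ε⌉, ⌈c/ε⌉, ⌊s/ε⌋)-list-disjunct matrix in which every column contains at least one and at most s ones. Let x ∈ ℝ^n be nonzero with nonnegative coordinates, let y = Mx, and define estimates x̂_i = min{ y_q : M_{q,i} = 1 }. Then every set L ⊆ {1,…,n} with |L| ≥ ⌈c/ε⌉ + ⌈1/ε⌉ such that x̂_i ≥ x̂_j for all i ∈ L and j ∉ L contains every index i with x_i ≥ ε·‖x‖₁. -/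
open Finset

/-- Correctness of the heavy hitters scheme built from error-correcting list-disjunct
matrices: if the binary matrix `M` is `(⌈1/ε⌉, ⌈c/ε⌉, ⌊s/ε⌋)`-list-disjunct with column
sparsity between `1` and `s`, then any set of `⌈c/ε⌉ + ⌈1/ε⌉` coordinates with the
largest estimates contains every `ε`-heavy hitter of the nonnegative input. -/
theorem list_disjunct_heavy_hitters (ε c : ℝ) (hε0 : 0 < ε) (hε1 : ε < 1) (hc : 0 < c)
    (s m n : ℕ) (hs : 0 < s) (hm : 0 < m) (hn : 0 < n)
    (M : Matrix (Fin m) (Fin n) Bool)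
    (hcol : ∀ j : Fin n,
      1 ≤ (Finset.univ.filter (fun q => M q j = true)).card ∧
      (Finset.univ.filter (fun q => M q j = true)).card ≤ s)
    (hLD : ∀ Sset Tset : Finset (Fin n), Disjoint Sset Tset →
      Sset.card = ⌈1/ε⌉₊ → Tset.card = ⌈c/ε⌉₊ →
      ∀ X : Finset (Fin m), X.card ≤ ⌊(s : ℝ)/ε⌋₊ →
      ∃ j ∈ Tset, ∃ q : Fin m, M q j = true ∧ q ∉ X ∧ ∀ j' ∈ Sset, M q j' = false)
    (x : Fin n → ℝ) (hx : x ≠ 0) (hxpos : ∀ i, 0 ≤ x i) :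
    ∀ L : Finset (Fin n), ⌈c/ε⌉₊ + ⌈1/ε⌉₊ ≤ L.card →
      (∀ i ∈ L, ∀ j ∉ L,
        sInf {v : ℝ | ∃ q : Fin m, M q j = true ∧
          v = ∑ i' ∈ Finset.univ.filter (fun i' => M q i' = true), x i'} ≤
        sInf {v : ℝ | ∃ q : Fin m, M q i = true ∧
          v = ∑ i' ∈ Finset.univ.filter (fun i' => M q i' = true), x i'}) →
      ∀ i : Fin n, ε * (∑ j, |x j|) ≤ x i → i ∈ L := by
  intro L hL hest i hheavy
  by_contra hiL
  have hNpos : 0 < ∑ j, x j := by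
    obtain ⟨j, hj⟩ := Function.ne_iff.mp hx
    exact lt_of_lt_of_le (lt_of_le_of_ne (hxpos j) (Ne.symm hj))
      (Finset.single_le_sum (fun k _ => hxpos k) (mem_univ j))
  have hxabs : (∑ j, |x j|) = ∑ j, x j :=
    Finset.sum_congr rfl fun j _ => abs_of_nonneg (hxpos j)
  rw [hxabs] at hheavy
  set N : ℝ := ∑ j, x j with hNdef
  -- lower bound on the estimate
  have hlow : ∀ j : Fin n, x j ≤ sInf {v : ℝ | ∃ q : Fin m, M q j = true ∧
      v = ∑ i' ∈ Finset.univ.filter (fun i' => M q i' = true), x i'} := by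
    intro j
    apply le_csInf
    · obtain ⟨q, hq⟩ := Finset.card_pos.mp (lt_of_lt_of_le one_pos (hcol j).1)
      exact ⟨_, q, (mem_filter.mp hq).2, rfl⟩
    · rintro v ⟨q, hMq, rfl⟩
      exact Finset.single_le_sum (fun k _ => hxpos k) (mem_filter.mpr ⟨mem_univ j, hMq⟩)
  -- upper bound on the estimate by any row measurement
  have hup : ∀ (j : Fin n) (q : Fin m), M q j = true →
      sInf {v : ℝ | ∃ q : Fin m, M q j = true ∧
        v = ∑ i' ∈ Finset.univ.filter (fun i' => M q i' = true), x i'} ≤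
      ∑ i' ∈ Finset.univ.filter (fun i' => M q i' = true), x i' := by
    intro j q hMq
    apply csInf_le
    · refine ⟨0, ?_⟩
      rintro v ⟨q', _, rfl⟩
      exact Finset.sum_nonneg fun k _ => hxpos k
    · exact ⟨q, hMq, rfl⟩
  -- heavy hitter set
  set H : Finset (Fin n) := Finset.univ.filter (fun j => ε * N ≤ x j) with hHdef
  have hiH : i ∈ H := mem_filter.mpr ⟨mem_univ i, hheavy⟩
  have hHcard : H.card ≤ ⌈1/ε⌉₊ := by
    have h1 : (H.card : ℝ) * (ε * N) ≤ ∑ j ∈ H, x j := by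
      have := Finset.card_nsmul_le_sum H x (ε * N)
        (fun j hj => (mem_filter.mp hj).2)
      simpa [nsmul_eq_mul] using this
    have h2 : ∑ j ∈ H, x j ≤ N :=
      Finset.sum_le_sum_of_subset_of_nonneg (subset_univ H) (fun k _ _ => hxpos k)
    have h3 : (H.card : ℝ) ≤ 1/ε := by
      rw [le_div_iff₀ hε0]
      nlinarith [h1.trans h2]
    have h4 : (H.card : ℝ) ≤ (⌈1/ε⌉₊ : ℝ) := h3.trans (Nat.le_ceil _)
    exact_mod_cast h4
  have hLn : L.card ≤ n := by simpa using Finset.card_le_card (subset_univ L)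
  -- pad H to S of size ⌈1/ε⌉₊
  obtain ⟨S, hHS, -, hScard⟩ := Finset.exists_subsuperset_card_eq (subset_univ H)
    hHcard (by simpa using le_trans (Nat.le_add_left _ _) (hL.trans hLn))
  -- choose T ⊆ L \ S of size ⌈c/ε⌉₊
  have hLS : ⌈c/ε⌉₊ ≤ (L \ S).card := by
    have := Finset.le_card_sdiff S L
    omega
  obtain ⟨T, hTsub, hTcard⟩ := Finset.exists_subset_card_eq hLS
  have hST : Disjoint S T :=
    (Finset.sdiff_disjoint (s := S) (t := L)).symm.mono_right hTsub
  -- bad rows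
  set X : Finset (Fin m) := Finset.univ.filter (fun q =>
    ε * N ≤ ∑ i' ∈ Finset.univ.filter (fun i' => M q i' = true ∧ i' ∉ S), x i') with hXdef
  have hXcard : X.card ≤ ⌊(s : ℝ)/ε⌋₊ := by
    have h1 : (X.card : ℝ) * (ε * N) ≤
        ∑ q ∈ X, ∑ i' ∈ Finset.univ.filter (fun i' => M q i' = true ∧ i' ∉ S), x i' := by
      have := Finset.card_nsmul_le_sum X
        (fun q => ∑ i' ∈ Finset.univ.filter (fun i' => M q i' = true ∧ i' ∉ S), x i')
        (ε * N) (fun q hq => (mem_filter.mp hq).2)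
      simpa [nsmul_eq_mul] using this
    have h2 : ∑ q ∈ X, ∑ i' ∈ Finset.univ.filter (fun i' => M q i' = true ∧ i' ∉ S), x i' ≤
        ∑ q : Fin m, ∑ i' ∈ Finset.univ.filter (fun i' => M q i' = true ∧ i' ∉ S), x i' :=
      Finset.sum_le_sum_of_subset_of_nonneg (subset_univ X)
        (fun q _ _ => Finset.sum_nonneg fun k _ => hxpos k)
    have h3 : ∑ q : Fin m, ∑ i' ∈ Finset.univ.filter (fun i' => M q i' = true ∧ i' ∉ S), x i' ≤
        (s : ℝ) * N := by
      have hswap : ∑ q : Fin m, ∑ i' ∈ Finset.univ.filter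
            (fun i' => M q i' = true ∧ i' ∉ S), x i'
          = ∑ i' : Fin n, ∑ q : Fin m,
            (if M q i' = true ∧ i' ∉ S then x i' else 0) := by
        simp_rw [Finset.sum_filter]
        exact Finset.sum_comm
      rw [hswap, hNdef, Finset.mul_sum]
      apply Finset.sum_le_sum
      intro i' _
      by_cases hiS : i' ∈ S
      · simp only [hiS, not_true_eq_false, and_false, if_false, Finset.sum_const_zero]
        exact mul_nonneg (Nat.cast_nonneg s) (hxpos i')
      · have : ∑ q : Fin m, (if M q i' = true ∧ i' ∉ S then x i' else 0)
            = ((Finset.univ.filter (fun q => M q i' = true)).card : ℝ) * x i' := by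
          simp only [hiS, not_false_iff, and_true]
          rw [← Finset.sum_filter, Finset.sum_const, nsmul_eq_mul]
        rw [this]
        exact mul_le_mul_of_nonneg_right (by exact_mod_cast (hcol i').2) (hxpos i')
    have h4 : (X.card : ℝ) ≤ (s : ℝ) / ε := by
      rw [le_div_iff₀ hε0]
      nlinarith [h1.trans (h2.trans h3)]
    exact Nat.le_floor h4
  -- apply list-disjunctness
  obtain ⟨j, hjT, q, hMqj, hqX, hSmiss⟩ := hLD S T hST hScard hTcard X hXcard
  have hjL : j ∈ L := (Finset.mem_sdiff.mp (hTsub hjT)).1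
  -- the measurement of row q only involves light coordinates
  have hfilter : Finset.univ.filter (fun i' => M q i' = true)
      = Finset.univ.filter (fun i' => M q i' = true ∧ i' ∉ S) := by
    apply Finset.filter_congr
    intro i' _
    constructor
    · intro h
      refine ⟨h, fun hiS => ?_⟩
      have := hSmiss i' hiS
      rw [h] at this
      exact absurd this (by decide)
    · exact And.left
  have hqlight : ∑ i' ∈ Finset.univ.filter (fun i' => M q i' = true), x i' < ε * N := by
    rw [hfilter]
    have : q ∉ Finset.univ.filter (fun q =>
        ε * N ≤ ∑ i' ∈ Finset.univ.filter (fun i' => M q i' = true ∧ i' ∉ S), x i') := hqX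
    simp only [Finset.mem_filter, mem_univ, true_and, not_le] at this
    exact this
  have hchain : ε * N ≤ ∑ i' ∈ Finset.univ.filter (fun i' => M q i' = true), x i' :=
    le_trans (le_trans hheavy (hlow i)) (le_trans (hest j hjL i hiL) (hup j q hMqj))
  exact absurd hchain (not_le.mpr hqlight)
end

section
/- Let a, b, c be positive integers, let ε ∈ (0,1), let κ be a positive integer, and let ζ ∈ (0,1) satisfy (2/ε + 1)·2^{−κ} + ζ < 1. Let Con : {0,1}^a × {0,1}^b → {0,1}^c be a lossless (κ, ζ)-condenser, and set n = 2^a. Let x ∈ ℝ^n (indexed by {0,1}^a) be nonzero with nonnegative coordinates; define counters C_{j,w} = Σ_{i ∈ {0,1}^a : Con(i,j)=w} x_i for j ∈ {0,1}^b and w ∈ {0,1}^c, and estimates x̂_i = min_{j ∈ {0,1}^b} C_{j, Con(i,j)}. Then every set L ⊆ {0,1}^a with |L| ≥ 2^κ + ⌈1/ε⌉ such that x̂_i ≥ x̂_j for all i ∈ L and j ∉ L contains every index i with x_i ≥ ε·‖x‖₁. -/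
open Finset

/-- Correctness of the heavy hitters scheme built from a lossless `(κ, ζ)`-condenser
`Con : {0,1}^a × {0,1}^b → {0,1}^c` in the strict turnstile model: if
`(2/ε + 1)·2^{−κ} + ζ < 1`, then any set of `2^κ + ⌈1/ε⌉` coordinates with the largest
Count-Min-style estimates contains every `ε`-heavy hitter of the nonnegative input. -/
theorem condenser_heavy_hitters (a b c κ : ℕ) (ha : 0 < a) (hb : 0 < b) (hc : 0 < c)
    (hκ : 0 < κ) (ε ζ : ℝ) (hε0 : 0 < ε) (hε1 : ε < 1) (hζ0 : 0 < ζ) (hζ1 : ζ < 1)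
    (hparam : (2/ε + 1) * ((2:ℝ)^κ)⁻¹ + ζ < 1)
    (Con : (Fin a → Bool) → (Fin b → Bool) → (Fin c → Bool))
    -- `Con` is a lossless (κ, ζ)-condenser: for every source distribution `p` of
    -- min-entropy ≥ κ, the joint distribution of (seed, output) is ζ-close in total
    -- variation to some distribution `q` of min-entropy ≥ b + κ
    (hcond : ∀ p : (Fin a → Bool) → ℝ,
      (∀ i, 0 ≤ p i) → (∑ i, p i = 1) → (∀ i, p i ≤ ((2:ℝ)^κ)⁻¹) →
      ∃ q : (Fin b → Bool) × (Fin c → Bool) → ℝ,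
        (∀ v, 0 ≤ q v) ∧ (∑ v, q v = 1) ∧ (∀ v, q v ≤ ((2:ℝ)^(b+κ))⁻¹) ∧
        (1/2) * ∑ v : (Fin b → Bool) × (Fin c → Bool),
          |((2:ℝ)^b)⁻¹ * (∑ i ∈ Finset.univ.filter (fun i => Con i v.1 = v.2), p i)
            - q v| ≤ ζ)
    (x : (Fin a → Bool) → ℝ) (hx : x ≠ 0) (hxpos : ∀ i, 0 ≤ x i) :
    ∀ L : Finset (Fin a → Bool), 2^κ + ⌈1/ε⌉₊ ≤ L.card →
      (∀ i ∈ L, ∀ j ∉ L,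
        (⨅ j' : Fin b → Bool,
          ∑ i' ∈ Finset.univ.filter (fun i' => Con i' j' = Con j j'), x i') ≤
        (⨅ j' : Fin b → Bool,
          ∑ i' ∈ Finset.univ.filter (fun i' => Con i' j' = Con i j'), x i')) →
      ∀ i, ε * (∑ j, |x j|) ≤ x i → i ∈ L := by
  intro L hL hord i0 hheavy
  by_contra hi0L
  classical
  set N : ℝ := ∑ j, x j with hNdef
  have hNabs : ∑ j, |x j| = N := Finset.sum_congr rfl (fun j _ => abs_of_nonneg (hxpos j))
  have hN0 : 0 < N := by
    obtain ⟨i, hi⟩ := Function.ne_iff.mp hx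
    exact Finset.sum_pos' (fun j _ => hxpos j)
      ⟨i, Finset.mem_univ i, (hxpos i).lt_of_ne' hi⟩
  set C : (Fin b → Bool) × (Fin c → Bool) → ℝ :=
    fun v => ∑ i' ∈ Finset.univ.filter (fun i' => Con i' v.1 = v.2), x i' with hCdef
  set est : (Fin a → Bool) → ℝ := fun i => ⨅ j', C (j', Con i j') with hestdef
  have hCnonneg : ∀ v, 0 ≤ C v := fun v => Finset.sum_nonneg fun i _ => hxpos i
  have hest_le : ∀ i j, est i ≤ C (j, Con i j) := fun i j =>
    ciInf_le (Set.Finite.bddBelow (Set.finite_range _)) j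
  have hx_le_est : ∀ i, x i ≤ est i := by
    intro i
    refine le_ciInf fun j => Finset.single_le_sum (fun i' _ => hxpos i') ?_
    simp
  have hheavy' : ε * N ≤ x i0 := by rwa [hNabs] at hheavy
  have hest_large : ∀ i ∈ L, ε * N ≤ est i := by
    intro i hi
    have h1 : est i0 ≤ est i := hord i hi i0 hi0L
    exact le_trans (le_trans hheavy' (hx_le_est i0)) h1
  obtain ⟨S, hSL, hScard⟩ := Finset.exists_subset_card_eq
    (le_trans (Nat.le_add_right _ _) hL)
  have hK0 : (0:ℝ) < 2^κ := by positivity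
  have hB0 : (0:ℝ) < 2^b := by positivity
  set p : (Fin a → Bool) → ℝ := fun i => if i ∈ S then ((2:ℝ)^κ)⁻¹ else 0 with hpdef
  have hp0 : ∀ i, 0 ≤ p i := by
    intro i
    by_cases h : i ∈ S <;> simp [hpdef, h, le_of_lt hK0, inv_nonneg]
  have hpsum : ∑ i, p i = 1 := by
    rw [hpdef]
    simp only
    rw [Finset.sum_ite_mem, Finset.univ_inter, Finset.sum_const, hScard, nsmul_eq_mul]
    push_cast
    exact mul_inv_cancel₀ (ne_of_gt hK0)
  have hpbound : ∀ i, p i ≤ ((2:ℝ)^κ)⁻¹ := by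
    intro i
    by_cases h : i ∈ S <;> simp [hpdef, h, le_of_lt hK0, inv_nonneg]
  obtain ⟨q, hq0, hqsum, hqbound, hqTV⟩ := hcond p hp0 hpsum hpbound
  set P : (Fin b → Bool) × (Fin c → Bool) → ℝ :=
    fun v => ((2:ℝ)^b)⁻¹ * (∑ i ∈ Finset.univ.filter (fun i => Con i v.1 = v.2), p i)
    with hPdef
  have hqTV' : (1/2 : ℝ) * ∑ v, |P v - q v| ≤ ζ := hqTV
  have hcardb : (Fintype.card (Fin b → Bool) : ℝ) = (2:ℝ)^b := by
    rw [Fintype.card_fun]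
    push_cast
    simp
  have hPsum : ∑ v, P v = 1 := by
    rw [hPdef]
    simp only
    rw [← Finset.mul_sum]
    have h1 : ∑ v : (Fin b → Bool) × (Fin c → Bool),
        (∑ i ∈ Finset.univ.filter (fun i => Con i v.1 = v.2), p i)
        = ∑ j : Fin b → Bool, ∑ i, p i := by
      rw [Fintype.sum_prod_type]
      exact Finset.sum_congr rfl fun j _ =>
        Finset.sum_fiberwise Finset.univ (fun i => Con i j) p
    rw [h1, hpsum]
    simp only [Finset.sum_const, Finset.card_univ, nsmul_eq_mul, mul_one]
    rw [hcardb, inv_mul_cancel₀ (ne_of_gt hB0)]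
  set E : Finset ((Fin b → Bool) × (Fin c → Bool)) :=
    Finset.univ.filter (fun v => ε * N ≤ C v) with hEdef
  have hPzero : ∀ v ∉ E, P v = 0 := by
    intro v hv
    have hvC : ¬ (ε * N ≤ C v) := by
      intro h
      exact hv (Finset.mem_filter.mpr ⟨Finset.mem_univ v, h⟩)
    have hz : ∀ i ∈ Finset.univ.filter (fun i => Con i v.1 = v.2), p i = 0 := by
      intro i hi
      have hi2 : Con i v.1 = v.2 := (Finset.mem_filter.mp hi).2
      have hiS : i ∉ S := by
        intro hiS
        apply hvC
        calc ε * N ≤ est i := hest_large i (hSL hiS)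
          _ ≤ C (v.1, Con i v.1) := hest_le i v.1
          _ = C v := by rw [hi2]
      simp [hpdef, hiS]
    rw [hPdef]
    simp only
    rw [Finset.sum_eq_zero hz, mul_zero]
  have hPE : ∑ v ∈ E, P v = 1 := by
    rw [← hPsum]
    exact Finset.sum_subset E.subset_univ (fun v _ hv => hPzero v hv)
  -- bound on q(E)
  have hqE_le : ∑ v ∈ E, q v ≤ (E.card : ℝ) * ((2:ℝ)^(b+κ))⁻¹ := by
    calc ∑ v ∈ E, q v ≤ ∑ _v ∈ E, ((2:ℝ)^(b+κ))⁻¹ :=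
          Finset.sum_le_sum (fun v _ => hqbound v)
      _ = (E.card : ℝ) * ((2:ℝ)^(b+κ))⁻¹ := by
          rw [Finset.sum_const, nsmul_eq_mul]
  -- bound on card E
  have hCsum : ∑ v : (Fin b → Bool) × (Fin c → Bool), C v = (2:ℝ)^b * N := by
    rw [hCdef]
    simp only
    rw [Fintype.sum_prod_type]
    have h1 : ∀ j : Fin b → Bool,
        (∑ w : Fin c → Bool, ∑ i' ∈ Finset.univ.filter (fun i' => Con i' j = w), x i') = N :=
      fun j => Finset.sum_fiberwise Finset.univ (fun i => Con i j) x
    rw [Finset.sum_congr rfl (fun j _ => h1 j)]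
    simp only [Finset.sum_const, Finset.card_univ, nsmul_eq_mul]
    rw [hcardb]
  have hEcard : (E.card : ℝ) * (ε * N) ≤ (2:ℝ)^b * N := by
    calc (E.card : ℝ) * (ε * N) = ∑ _v ∈ E, (ε * N) := by
          rw [Finset.sum_const, nsmul_eq_mul]
      _ ≤ ∑ v ∈ E, C v := Finset.sum_le_sum (fun v hv => (Finset.mem_filter.mp hv).2)
      _ ≤ ∑ v, C v := Finset.sum_le_sum_of_subset_of_nonneg E.subset_univ
          (fun v _ _ => hCnonneg v)
      _ = (2:ℝ)^b * N := hCsum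
  have hEcard' : (E.card : ℝ) * ε ≤ (2:ℝ)^b := by
    have h := hEcard
    nlinarith [hN0]
  -- TV argument: ζ ≥ 1 - q(E)
  set qE : ℝ := ∑ v ∈ E, q v with hqEdef
  have hT1 : |(1:ℝ) - qE| ≤ ∑ v ∈ E, |P v - q v| := by
    have : ∑ v ∈ E, (P v - q v) = 1 - qE := by
      rw [Finset.sum_sub_distrib, hPE]
    calc |(1:ℝ) - qE| = |∑ v ∈ E, (P v - q v)| := by rw [this]
      _ ≤ ∑ v ∈ E, |P v - q v| := Finset.abs_sum_le_sum_abs _ _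
  have hT2 : 1 - qE ≤ ∑ v ∈ Finset.univ \ E, |P v - q v| := by
    have h1 : ∀ v ∈ Finset.univ \ E, |P v - q v| = q v := by
      intro v hv
      rw [hPzero v (Finset.mem_sdiff.mp hv).2, zero_sub, abs_neg, abs_of_nonneg (hq0 v)]
    rw [Finset.sum_congr rfl h1]
    have h2 : ∑ v ∈ Finset.univ \ E, q v + qE = 1 := by
      rw [hqEdef, Finset.sum_sdiff E.subset_univ, hqsum]
    linarith
  have hsplit : ∑ v ∈ Finset.univ \ E, |P v - q v| + ∑ v ∈ E, |P v - q v|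
      = ∑ v, |P v - q v| := Finset.sum_sdiff E.subset_univ
  have hzeta : 1 - qE ≤ ζ := by
    have habs : 1 - qE ≤ |(1:ℝ) - qE| := le_abs_self _
    linarith
  -- combine
  have hpow : ((2:ℝ)^(b+κ))⁻¹ = ((2:ℝ)^b)⁻¹ * ((2:ℝ)^κ)⁻¹ := by
    rw [pow_add, mul_inv]
  have hqE2 : qE ≤ ((2:ℝ)^κ)⁻¹ / ε := by
    have hEc : (E.card : ℝ) ≤ (2:ℝ)^b / ε := (le_div_iff₀ hε0).mpr hEcard'
    calc qE ≤ (E.card : ℝ) * ((2:ℝ)^(b+κ))⁻¹ := hqE_le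
      _ = (E.card : ℝ) * (((2:ℝ)^b)⁻¹ * ((2:ℝ)^κ)⁻¹) := by rw [hpow]
      _ ≤ ((2:ℝ)^b / ε) * (((2:ℝ)^b)⁻¹ * ((2:ℝ)^κ)⁻¹) := by
          apply mul_le_mul_of_nonneg_right hEc
          positivity
      _ = ((2:ℝ)^κ)⁻¹ / ε := by
          field_simp
  have hlt : ((2:ℝ)^κ)⁻¹ / ε ≤ (2/ε + 1) * ((2:ℝ)^κ)⁻¹ := by
    have h1 : ((2:ℝ)^κ)⁻¹ / ε = (1/ε) * ((2:ℝ)^κ)⁻¹ := by ring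
    have h2 : (2:ℝ)/ε = 2 * (1/ε) := by ring
    have h3 : (0:ℝ) < 1/ε := by positivity
    have h4 : (0:ℝ) ≤ ((2:ℝ)^κ)⁻¹ := by positivity
    rw [h1]
    apply mul_le_mul_of_nonneg_right _ h4
    rw [h2]
    linarith
  linarith
end
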